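/- arXiv:0901.4056 — 5 statements merged into one kernel-verified Lean document; each statement's English description precedes it below -/
import Mathlib

section
/- Let (X_i)_{i≥1} be a sequence of random variables adapted to a filtration (F_i) with 0 ≤ X_i ≤ M almost surely for all i and some constant M > 0, and let Y_i = E[X_i | F_{i-1}]. Then for any h > 0, the probability that there exists some t with |Σ_{i≤t} X_i / Σ_{i≤t} Y_i − 1| ≥ 1/2 and Σ_{i≤t} Y_i ≥ h is at most exp(−h/(20M) + 2). -/
open MeasureTheory Finset



private lemma exp_le_quad {x : ℝ} (h0 : 0 ≤ x) (h1 : x ≤ 1) :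
    Real.exp x ≤ 1 + x + x ^ 2 := by
  have hb := Real.exp_bound (by rwa [abs_of_nonneg h0]) (n := 2) (by norm_num)
  rw [abs_of_nonneg h0] at hb
  have hs : ∑ m ∈ range 2, x ^ m / m.factorial = 1 + x := by
    simp [Finset.sum_range_succ]
  rw [hs] at hb
  have := (abs_sub_le_iff.1 hb).1
  norm_num at this
  nlinarith [sq_nonneg x]

private lemma exp_neg_le_quad {x : ℝ} (h0 : 0 ≤ x) (h1 : x ≤ 1) :
    Real.exp (-x) ≤ 1 - x + x ^ 2 := by
  have hb := Real.exp_bound (x := -x) (by rwa [abs_neg, abs_of_nonneg h0]) (n := 2) (by norm_num)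
  rw [abs_neg, abs_of_nonneg h0] at hb
  have hs : ∑ m ∈ range 2, (-x) ^ m / m.factorial = 1 - x := by
    simp [Finset.sum_range_succ]; ring
  rw [hs] at hb
  have := (abs_sub_le_iff.1 hb).1
  norm_num at this
  nlinarith [sq_nonneg x]

private lemma superm_maximal
    {Ω : Type*} {m0 : MeasurableSpace Ω} {μ : Measure Ω} [IsProbabilityMeasure μ]
    {ℱ : Filtration ℕ m0} {Z : ℕ → Ω → ℝ}
    (hZ : Supermartingale Z ℱ μ) (hpos : ∀ t ω, 0 ≤ Z t ω) {ε : ℝ} (hε : 0 < ε) :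
    (μ {ω | ∃ t, ε ≤ Z t ω}).toReal ≤ (∫ ω, Z 0 ω ∂μ) / ε := by
  have hmeasZ : ∀ t, Measurable (Z t) := fun t =>
    ((hZ.stronglyAdapted t).mono (ℱ.le t)).measurable
  set A : ℕ → Set Ω := fun n => {ω | ∃ k ≤ n, ε ≤ Z k ω} with hA
  have hAmeas : ∀ n, MeasurableSet (A n) := by
    intro n
    have : A n = ⋃ k ∈ Set.Iic n, {ω | ε ≤ Z k ω} := by
      ext ω; simp [hA]
    rw [this]
    exact MeasurableSet.biUnion (Set.to_countable _)
      fun k _ => measurableSet_le measurable_const (hmeasZ k)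
  have hmono : Monotone A := by
    intro a b hab ω hω
    obtain ⟨k, hk, hke⟩ := hω
    exact ⟨k, hk.trans hab, hke⟩
  have hunion : {ω | ∃ t, ε ≤ Z t ω} = ⋃ n, A n := by
    ext ω
    simp only [Set.mem_setOf_eq, Set.mem_iUnion, hA]
    exact ⟨fun ⟨t, ht⟩ => ⟨t, t, le_rfl, ht⟩, fun ⟨n, k, _, hk⟩ => ⟨k, hk⟩⟩
  have hint0 : (0:ℝ) ≤ ∫ ω, Z 0 ω ∂μ := integral_nonneg (hpos 0)
  have key : ∀ n, (μ (A n)).toReal ≤ (∫ ω, Z 0 ω ∂μ) / ε := by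
    intro n
    set τ := fun ω => ((hittingBtwn Z (Set.Ici ε) 0 n ω : ℕ) : WithTop ℕ) with hτdef
    have hτ : IsStoppingTime ℱ τ :=
      hZ.stronglyAdapted.adapted.isStoppingTime_hittingBtwn measurableSet_Ici
    have hτle : ∀ ω, τ ω ≤ n := fun ω => WithTop.coe_le_coe.2 (hittingBtwn_le ω)
    have hSV_int : Integrable (stoppedValue Z τ) μ :=
      integrable_stoppedValue ℕ hτ hZ.integrable hτle
    have hSV_ge : ∀ ω ∈ A n, ε ≤ stoppedValue Z τ ω := by
      intro ω hω
      obtain ⟨k, hk, hke⟩ := hω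
      exact stoppedValue_hittingBtwn_mem ⟨k, by simpa using hk, hke⟩
    have h1 : ε * (μ (A n)).toReal ≤ ∫ ω in A n, stoppedValue Z τ ω ∂μ :=
      by
        have := setIntegral_ge_of_const_le (hAmeas n) (measure_ne_top μ _) hSV_ge hSV_int.integrableOn
        rw [smul_eq_mul, mul_comm] at this
        exact this
    have h2 : ∫ ω in A n, stoppedValue Z τ ω ∂μ ≤ ∫ ω, stoppedValue Z τ ω ∂μ :=
      setIntegral_le_integral hSV_int (Filter.Eventually.of_forall fun ω => hpos _ ω)
    have h3 : ∫ ω, stoppedValue Z τ ω ∂μ ≤ ∫ ω, Z 0 ω ∂μ := by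
      have hmono := hZ.neg.expected_stoppedValue_mono (isStoppingTime_const ℱ 0) hτ
        (fun ω => WithTop.coe_le_coe.2 (Nat.zero_le _)) hτle
      simp only [stoppedValue, Pi.neg_apply, integral_neg, neg_le_neg_iff] at hmono
      exact hmono
    rw [le_div_iff₀ hε]
    calc (μ (A n)).toReal * ε = ε * (μ (A n)).toReal := mul_comm _ _
      _ ≤ _ := h1.trans (h2.trans h3)
  rw [hunion, hmono.directed_le.measure_iUnion]
  refine ENNReal.toReal_le_of_le_ofReal (div_nonneg hint0 hε.le) (iSup_le fun n => ?_)
  calc μ (A n) = ENNReal.ofReal (μ (A n)).toReal :=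
        (ENNReal.ofReal_toReal (measure_ne_top μ _)).symm
    _ ≤ _ := ENNReal.ofReal_le_ofReal (key n)

private lemma exp_superm
    {Ω : Type*} {m0 : MeasurableSpace Ω} {μ : Measure Ω} [IsProbabilityMeasure μ]
    {ℱ : Filtration ℕ m0} {Xb : ℕ → Ω → ℝ} {M : ℝ} (hM : 0 < M)
    (hadp : ∀ i, StronglyMeasurable[ℱ (i + 1)] (Xb i))
    (hbdd : ∀ i ω, 0 ≤ Xb i ω ∧ Xb i ω ≤ M)
    (a b : ℝ)
    (key : ∀ x : ℝ, 0 ≤ x → x ≤ M → Real.exp (a * x) ≤ 1 - b * x) :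
    Supermartingale
      (fun t ω => Real.exp (∑ i ∈ range t, (a * Xb i ω + b * (μ[Xb i | ℱ i]) ω))) ℱ μ := by
  set Yb : ℕ → Ω → ℝ := fun i => μ[Xb i | ℱ i] with hYbdef
  set Z : ℕ → Ω → ℝ := fun t ω => Real.exp (∑ i ∈ range t, (a * Xb i ω + b * Yb i ω)) with hZdef
  have hXmeas : ∀ i, StronglyMeasurable (Xb i) := fun i => (hadp i).mono (ℱ.le _)
  have hXint : ∀ i, Integrable (Xb i) μ := by
    intro i
    refine Integrable.mono' (integrable_const M) (hXmeas i).aestronglyMeasurable ?_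
    filter_upwards with ω
    rw [Real.norm_eq_abs, abs_of_nonneg (hbdd i ω).1]
    exact (hbdd i ω).2
  have hYmeas : ∀ i, StronglyMeasurable[ℱ i] (Yb i) := fun i => stronglyMeasurable_condExp
  have hYbdd : ∀ i, ∀ᵐ ω ∂μ, 0 ≤ Yb i ω ∧ Yb i ω ≤ M := by
    intro i
    have h1 : 0 ≤ᵐ[μ] Yb i :=
      condExp_nonneg (Filter.Eventually.of_forall fun ω => (hbdd i ω).1)
    have h2 : Yb i ≤ᵐ[μ] μ[(fun _ => M) | ℱ i] :=
      condExp_mono (hXint i) (integrable_const M)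
        (Filter.Eventually.of_forall fun ω => (hbdd i ω).2)
    rw [condExp_const (ℱ.le i)] at h2
    filter_upwards [h1, h2] with ω hω1 hω2 using ⟨hω1, hω2⟩
  have hall : ∀ᵐ ω ∂μ, ∀ i, 0 ≤ Yb i ω ∧ Yb i ω ≤ M := ae_all_iff.2 hYbdd
  have hZmeas : ∀ t, StronglyMeasurable[ℱ t] (Z t) := by
    intro t
    refine Continuous.comp_stronglyMeasurable Real.continuous_exp ?_
    refine Finset.stronglyMeasurable_fun_sum _ fun i hi => ?_
    have hit : i + 1 ≤ t := mem_range.1 hi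
    exact (((hadp i).mono (ℱ.mono hit)).const_mul a).add
      (((hYmeas i).mono (ℱ.mono ((Nat.le_succ i).trans hit))).const_mul b)
  have hZpos : ∀ t ω, 0 < Z t ω := fun t ω => Real.exp_pos _
  have hZint : ∀ t, Integrable (Z t) μ := by
    intro t
    refine Integrable.mono' (integrable_const (Real.exp (t * ((|a| + |b|) * M))))
      ((hZmeas t).mono (ℱ.le t)).aestronglyMeasurable ?_
    filter_upwards [hall] with ω hω
    rw [Real.norm_eq_abs, abs_of_pos (hZpos t ω), hZdef, Real.exp_le_exp]
    calc ∑ i ∈ range t, (a * Xb i ω + b * Yb i ω)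
        ≤ ∑ _i ∈ range t, (|a| + |b|) * M := by
          refine Finset.sum_le_sum fun i _ => ?_
          have h1 := hbdd i ω
          have h2 := hω i
          nlinarith [mul_nonneg (sub_nonneg.2 (le_abs_self a)) h1.1,
            mul_nonneg (abs_nonneg a) (sub_nonneg.2 h1.2),
            mul_nonneg (sub_nonneg.2 (le_abs_self b)) h2.1,
            mul_nonneg (abs_nonneg b) (sub_nonneg.2 h2.2)]
      _ = t * ((|a| + |b|) * M) := by
          rw [Finset.sum_const, card_range, nsmul_eq_mul]
  refine supermartingale_nat hZmeas hZint fun t => ?_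
  set W : Ω → ℝ := fun ω => Z t ω * Real.exp (b * Yb t ω) with hWdef
  set G : Ω → ℝ := fun ω => Real.exp (a * Xb t ω) with hGdef
  have hZsucc : Z (t + 1) = W * G := by
    funext ω
    simp only [hZdef, hWdef, hGdef, Pi.mul_apply]
    rw [Finset.sum_range_succ, Real.exp_add, Real.exp_add]
    ring
  have hWmeas : StronglyMeasurable[ℱ t] W :=
    (hZmeas t).mul (Real.continuous_exp.comp_stronglyMeasurable ((hYmeas t).const_mul b))
  have hGint : Integrable G μ := by
    refine Integrable.mono' (integrable_const (Real.exp (|a| * M)))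
      (Real.continuous_exp.comp_stronglyMeasurable
        ((hXmeas t).const_mul a)).aestronglyMeasurable ?_
    filter_upwards with ω
    rw [Real.norm_eq_abs, abs_of_pos (Real.exp_pos _), Real.exp_le_exp]
    have h1 := hbdd t ω
    nlinarith [mul_nonneg (sub_nonneg.2 (le_abs_self a)) h1.1,
      mul_nonneg (abs_nonneg a) (sub_nonneg.2 h1.2)]
  have hWGint : Integrable (W * G) μ := hZsucc ▸ hZint (t + 1)
  have hpull : μ[Z (t + 1) | ℱ t] =ᵐ[μ] W * μ[G | ℱ t] := by
    rw [hZsucc]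
    exact condExp_mul_of_stronglyMeasurable_left hWmeas hWGint hGint
  have hcond_le : μ[G | ℱ t] ≤ᵐ[μ] fun ω => Real.exp (-(b * Yb t ω)) := by
    have h1 : μ[G | ℱ t] ≤ᵐ[μ] μ[(fun _ => (1:ℝ)) - b • Xb t | ℱ t] := by
      refine condExp_mono hGint ((integrable_const 1).sub ((hXint t).smul b)) ?_
      filter_upwards with ω
      simpa [smul_eq_mul] using key (Xb t ω) (hbdd t ω).1 (hbdd t ω).2
    have h2 : μ[(fun _ => (1:ℝ)) - b • Xb t | ℱ t] =ᵐ[μ] fun ω => 1 - b * Yb t ω := by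
      refine (condExp_sub (m := ℱ t) (integrable_const 1) ((hXint t).smul b)).trans ?_
      have h3 := condExp_smul (μ := μ) (m := ℱ t) b (Xb t)
      rw [condExp_const (ℱ.le t)]
      filter_upwards [h3] with ω hω
      simp only [Pi.sub_apply, hω, Pi.smul_apply, smul_eq_mul]; rfl
    refine h1.trans (h2.le.trans ?_)
    filter_upwards with ω
    have := Real.add_one_le_exp (-(b * Yb t ω))
    linarith
  filter_upwards [hpull, hcond_le] with ω h1 h2
  have hWpos : 0 ≤ W ω := mul_nonneg (hZpos t ω).le (Real.exp_pos _).le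
  calc (μ[Z (t + 1) | ℱ t]) ω = W ω * (μ[G | ℱ t]) ω := h1
    _ ≤ W ω * Real.exp (-(b * Yb t ω)) := mul_le_mul_of_nonneg_left h2 hWpos
    _ = Z t ω := by
        rw [hWdef]
        simp only []
        rw [mul_assoc, ← Real.exp_add, add_neg_cancel, Real.exp_zero, mul_one]

/-- The large deviation inequality relating a sum of uniformly bounded nonnegative
random variables `X i` (here `X i` is the `(i+1)`-st variable, measurable with respect
to `ℱ (i+1)`) to the sum of its one-step predictions `Y i = E[X i | ℱ i]`: the probability
that for some `t` the ratio of the two partial sums deviates from `1` by at least `1/2`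
while the sum of predictions is at least `h` is at most `exp (-h/(20M) + 2)`. -/
theorem prop_predictions
    {Ω : Type*} {m0 : MeasurableSpace Ω} {μ : Measure Ω} [IsProbabilityMeasure μ]
    (ℱ : Filtration ℕ m0) (X Y : ℕ → Ω → ℝ) (M : ℝ) (hM : 0 < M)
    (hadp : ∀ i : ℕ, StronglyMeasurable[ℱ (i + 1)] (X i))
    (hbdd : ∀ i : ℕ, ∀ᵐ ω ∂μ, 0 ≤ X i ω ∧ X i ω ≤ M)
    (hY : ∀ i : ℕ, Y i =ᵐ[μ] μ[X i | ℱ i])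
    (h : ℝ) (hh : 0 < h) :
    (μ {ω | ∃ t : ℕ,
        1 / 2 ≤ |(∑ i ∈ Finset.range t, X i ω) / (∑ i ∈ Finset.range t, Y i ω) - 1| ∧
        h ≤ ∑ i ∈ Finset.range t, Y i ω}).toReal
      ≤ Real.exp (-h / (20 * M) + 2) := by
    classical
  set l : ℝ := 1 / (4 * M) with hldef
  have hl : 0 < l := by rw [hldef]; positivity
  have hlM : l * M = 1 / 4 := by rw [hldef]; field_simp
  set Xb : ℕ → Ω → ℝ := fun i ω => max 0 (min (X i ω) M) with hXbdef
  have hadp' : ∀ i, StronglyMeasurable[ℱ (i + 1)] (Xb i) := by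
    intro i
    letI : MeasurableSpace Ω := ℱ (i + 1)
    exact stronglyMeasurable_const.sup ((hadp i).inf stronglyMeasurable_const)
  have hbdd' : ∀ i ω, 0 ≤ Xb i ω ∧ Xb i ω ≤ M := fun i ω =>
    ⟨le_max_left 0 _, max_le hM.le (min_le_right _ _)⟩
  set Yb : ℕ → Ω → ℝ := fun i => μ[Xb i | ℱ i] with hYbdef
  -- the two pointwise key inequalities
  have key_quad : ∀ x : ℝ, 0 ≤ x → x ≤ M → (l * x) ^ 2 ≤ l ^ 2 * M * x := by
    intro x hx0 hxM
    nlinarith [mul_nonneg (mul_nonneg hl.le hl.le) (mul_nonneg (sub_nonneg.2 hxM) hx0)]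
  have keyp : ∀ x : ℝ, 0 ≤ x → x ≤ M → Real.exp (l * x) ≤ 1 - (-(l + l ^ 2 * M)) * x := by
    intro x hx0 hxM
    have hu0 : 0 ≤ l * x := mul_nonneg hl.le hx0
    have hu1 : l * x ≤ 1 := by
      have : l * x ≤ l * M := mul_le_mul_of_nonneg_left hxM hl.le
      rw [hlM] at this; linarith
    have hq := exp_le_quad hu0 hu1
    have := key_quad x hx0 hxM
    nlinarith
  have keym : ∀ x : ℝ, 0 ≤ x → x ≤ M → Real.exp (-l * x) ≤ 1 - (l - l ^ 2 * M) * x := by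
    intro x hx0 hxM
    have hu0 : 0 ≤ l * x := mul_nonneg hl.le hx0
    have hu1 : l * x ≤ 1 := by
      have : l * x ≤ l * M := mul_le_mul_of_nonneg_left hxM hl.le
      rw [hlM] at this; linarith
    have hq := exp_neg_le_quad hu0 hu1
    rw [neg_mul]
    have := key_quad x hx0 hxM
    nlinarith
  -- the two supermartingales
  have hZp := exp_superm (μ := μ) hM hadp' hbdd' l (-(l + l ^ 2 * M)) keyp
  have hZm := exp_superm (μ := μ) hM hadp' hbdd' (-l) (l - l ^ 2 * M) keym
  set Zp : ℕ → Ω → ℝ :=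
    fun t ω => Real.exp (∑ i ∈ range t, (l * Xb i ω + -(l + l ^ 2 * M) * Yb i ω)) with hZpdef
  set Zm : ℕ → Ω → ℝ :=
    fun t ω => Real.exp (∑ i ∈ range t, (-l * Xb i ω + (l - l ^ 2 * M) * Yb i ω)) with hZmdef
  set eps : ℝ := Real.exp (h / (16 * M)) with hepsdef
  have heps : 0 < eps := Real.exp_pos _
  have hmaxp := superm_maximal hZp (fun t ω => (Real.exp_pos _).le) heps
  have hmaxm := superm_maximal hZm (fun t ω => (Real.exp_pos _).le) heps
  have hint1p : (∫ ω, Zp 0 ω ∂μ) = 1 := by simp [hZpdef]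
  have hint1m : (∫ ω, Zm 0 ω ∂μ) = 1 := by simp [hZmdef]
  rw [hint1p] at hmaxp
  rw [hint1m] at hmaxm
  have hbound : (1:ℝ) / eps = Real.exp (-(h / (16 * M))) := by
    rw [hepsdef, Real.exp_neg, one_div]
  -- event sets
  set Ap : Set Ω := {ω | ∃ t, eps ≤ Zp t ω} with hApdef
  set Am : Set Ω := {ω | ∃ t, eps ≤ Zm t ω} with hAmdef
  set E' : Set Ω := {ω | ∃ t : ℕ,
      1 / 2 ≤ |(∑ i ∈ range t, Xb i ω) / (∑ i ∈ range t, Yb i ω) - 1| ∧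
      h ≤ ∑ i ∈ range t, Yb i ω} with hE'def
  -- the original event equals E' a.e.
  have hXeq : ∀ i, X i =ᵐ[μ] Xb i := by
    intro i
    filter_upwards [hbdd i] with ω hω
    rw [hXbdef]
    simp only
    rw [min_eq_left hω.2, max_eq_right hω.1]
  have hYeq : ∀ i, Y i =ᵐ[μ] Yb i := fun i => (hY i).trans (condExp_congr_ae (hXeq i))
  have haeeq : ∀ᵐ ω ∂μ, ∀ i, X i ω = Xb i ω ∧ Y i ω = Yb i ω :=
    ae_all_iff.2 fun i => ((hXeq i).and (hYeq i))
  have hμeq : μ {ω | ∃ t : ℕ,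
      1 / 2 ≤ |(∑ i ∈ range t, X i ω) / (∑ i ∈ range t, Y i ω) - 1| ∧
      h ≤ ∑ i ∈ range t, Y i ω} = μ E' := by
    refine measure_congr (Filter.eventuallyEq_set.2 ?_)
    filter_upwards [haeeq] with ω hω
    have hSX : ∀ t : ℕ, ∑ i ∈ range t, X i ω = ∑ i ∈ range t, Xb i ω :=
      fun t => Finset.sum_congr rfl fun i _ => (hω i).1
    have hSY : ∀ t : ℕ, ∑ i ∈ range t, Y i ω = ∑ i ∈ range t, Yb i ω :=
      fun t => Finset.sum_congr rfl fun i _ => (hω i).2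
    simp only [hE'def, Set.mem_setOf_eq, hSX, hSY]
  -- E' ⊆ Ap ∪ Am
  have hsub : E' ⊆ Ap ∪ Am := by
    rintro ω ⟨t, habs, hT⟩
    set S : ℝ := ∑ i ∈ range t, Xb i ω with hSdef
    set T : ℝ := ∑ i ∈ range t, Yb i ω with hTdef
    have hTpos : 0 < T := hh.trans_le hT
    have e1 : 16 * M * l = 4 := by rw [hldef]; field_simp; ring
    have e2 : 16 * M * (l ^ 2 * M) = 1 := by rw [hldef]; field_simp; ring
    have h16 : (0:ℝ) < 16 * M := by positivity
    rcases le_abs.1 habs with hc | hc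
    · -- S/T ≥ 3/2
      left
      have hS32 : 3 / 2 * T ≤ S := by
        rw [← le_div_iff₀ hTpos]; linarith
      refine ⟨t, ?_⟩
      rw [hZpdef]
      simp only
      rw [hepsdef, Real.exp_le_exp]
      have hsum : ∑ i ∈ range t, (l * Xb i ω + -(l + l ^ 2 * M) * Yb i ω)
          = l * S + -(l + l ^ 2 * M) * T := by
        rw [Finset.sum_add_distrib, ← Finset.mul_sum, ← Finset.mul_sum]
      rw [hsum]
      have step1 : h / (16 * M) ≤ T / (16 * M) := by gcongr
      refine step1.trans ?_
      rw [div_le_iff₀ h16]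
      have key : T ≤ (l * S + -(l + l ^ 2 * M) * T) * (16 * M) := by
        have hexpand : (l * S + -(l + l ^ 2 * M) * T) * (16 * M) = 4 * S - 5 * T := by
          linear_combination (S - T) * e1 - T * e2
        rw [hexpand]; linarith
      linarith [key]
    · -- S/T ≤ 1/2
      right
      have hS12 : S ≤ 1 / 2 * T := by
        rw [← div_le_iff₀ hTpos]; linarith
      refine ⟨t, ?_⟩
      rw [hZmdef]
      simp only
      rw [hepsdef, Real.exp_le_exp]
      have hsum : ∑ i ∈ range t, (-l * Xb i ω + (l - l ^ 2 * M) * Yb i ω)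
          = -l * S + (l - l ^ 2 * M) * T := by
        rw [Finset.sum_add_distrib, ← Finset.mul_sum, ← Finset.mul_sum]
      rw [hsum]
      have step1 : h / (16 * M) ≤ T / (16 * M) := by gcongr
      refine step1.trans ?_
      rw [div_le_iff₀ h16]
      have key : T ≤ (-l * S + (l - l ^ 2 * M) * T) * (16 * M) := by
        have hexpand : (-l * S + (l - l ^ 2 * M) * T) * (16 * M) = -4 * S + 3 * T := by
          linear_combination (T - S) * e1 - T * e2
        rw [hexpand]; linarith
      linarith [key]
  -- put everything together
  rw [hμeq]
  have h1 : (μ E').toReal ≤ (μ Ap).toReal + (μ Am).toReal := by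
    calc (μ E').toReal ≤ (μ (Ap ∪ Am)).toReal :=
          ENNReal.toReal_mono (measure_ne_top _ _) (measure_mono hsub)
      _ ≤ (μ Ap + μ Am).toReal :=
          ENNReal.toReal_mono (by finiteness) (measure_union_le _ _)
      _ = (μ Ap).toReal + (μ Am).toReal :=
          ENNReal.toReal_add (measure_ne_top _ _) (measure_ne_top _ _)
  have h2 : (μ Ap).toReal + (μ Am).toReal
      ≤ Real.exp (-(h / (16 * M))) + Real.exp (-(h / (16 * M))) := by
    rw [← hbound]
    exact add_le_add hmaxp hmaxm
  refine h1.trans (h2.trans ?_)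
  have hexp2 : (2:ℝ) ≤ Real.exp 2 := by
    have := Real.add_one_le_exp (2:ℝ); linarith
  have hmono' : Real.exp (-(h / (16 * M))) ≤ Real.exp (-h / (20 * M)) := by
    rw [Real.exp_le_exp, neg_div]
    have : h / (20 * M) ≤ h / (16 * M) := by gcongr <;> linarith
    linarith
  calc Real.exp (-(h / (16 * M))) + Real.exp (-(h / (16 * M)))
      = 2 * Real.exp (-(h / (16 * M))) := by ring
    _ ≤ Real.exp 2 * Real.exp (-h / (20 * M)) := by
        exact mul_le_mul hexp2 hmono' (Real.exp_pos _).le (Real.exp_pos _).le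
    _ = Real.exp (-h / (20 * M) + 2) := by rw [← Real.exp_add]; ring_nf
end

section
/- Let (X_i)_{i≥1} be a sequence of random variables adapted to a filtration (F_i) with 0 ≤ X_i ≤ M almost surely for all i and some constant M > 0, and let Y_i = E[X_i | F_{i-1}]. Then for any 0 < ε ≤ 1/2 and any h > 0, the probability that there exists some t with |Σ_{i≤t} X_i / Σ_{i≤t} Y_i − 1| ≥ ε and Σ_{i≤t} Y_i ≥ h is at most exp(−hε²/(5M) + 2). -/
open MeasureTheory Finset

namespace PropPredAux


lemma exp_quad {x : ℝ} (hx : |x| ≤ 1) : Real.exp x ≤ 1 + x + 3 / 4 * x ^ 2 := by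
  have h := Real.exp_bound hx (n := 2) (by norm_num)
  have hsum : ∑ m ∈ range 2, x ^ m / (Nat.factorial m) = 1 + x := by
    simp [Finset.sum_range_succ, Nat.factorial]
  rw [hsum] at h
  have h2 : |x| ^ 2 = x ^ 2 := sq_abs x
  have h3 := (abs_sub_le_iff.1 h).1
  rw [h2] at h3
  norm_num at h3 ⊢
  linarith

lemma chord {M : ℝ} (hM : 0 < M) (l : ℝ) {x : ℝ} (hx0 : 0 ≤ x) (hxM : x ≤ M) :
    Real.exp (l * x) ≤ 1 + (Real.exp (l * M) - 1) / M * x := by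
  have hxm : x / M ≤ 1 := (div_le_one hM).2 hxM
  have h := convexOn_exp.2 (Set.mem_univ (0 : ℝ)) (Set.mem_univ (l * M))
      (show (0:ℝ) ≤ 1 - x / M by linarith) (show (0:ℝ) ≤ x / M by positivity)
      (show (1 - x / M) + x / M = 1 by ring)
  simp only [smul_eq_mul, mul_zero, zero_add, Real.exp_zero, mul_one] at h
  have hx' : x / M * (l * M) = l * x := by field_simp
  rw [hx'] at h
  have heq : 1 - x / M + x / M * Real.exp (l * M)
      = 1 + (Real.exp (l * M) - 1) / M * x := by field_simp; ring
  linarith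



lemma core {Ω : Type*} {m0 : MeasurableSpace Ω} {μ : Measure Ω} [IsProbabilityMeasure μ]
    (ℱ : Filtration ℕ m0) (X : ℕ → Ω → ℝ) (M : ℝ) (hM : 0 < M)
    (hadp : ∀ i : ℕ, StronglyMeasurable[ℱ (i + 1)] (X i))
    (hbdd : ∀ i : ℕ, ∀ᵐ ω ∂μ, 0 ≤ X i ω ∧ X i ω ≤ M)
    (l c a : ℝ)
    (hc : ∀ x : ℝ, 0 ≤ x → x ≤ M → Real.exp (l * x) ≤ 1 + c * x) :
    μ {ω | ∃ t : ℕ, a ≤ l * (∑ i ∈ range t, X i ω)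
        - c * (∑ i ∈ range t, (μ[X i | ℱ i]) ω)} ≤ ENNReal.ofReal (Real.exp (-a)) := by
  classical
  set Y : ℕ → Ω → ℝ := fun i => μ[X i | ℱ i] with hYdef
  set U : ℕ → Ω → ℝ := fun t ω => l * (∑ i ∈ range t, X i ω) - c * (∑ i ∈ range t, Y i ω)
    with hUdef
  set Z : ℕ → Ω → ℝ := fun t ω => Real.exp (U t ω) with hZdef
  -- basic facts
  have hXint : ∀ i, Integrable (X i) μ := by
    intro i
    refine Integrable.mono' (integrable_const M)
      ((hadp i).mono (ℱ.le _)).aestronglyMeasurable ?_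
    filter_upwards [hbdd i] with ω hω
    rw [Real.norm_eq_abs, abs_of_nonneg hω.1]; exact hω.2
  have hY0 : ∀ i, 0 ≤ᵐ[μ] Y i := fun i =>
    condExp_nonneg (by filter_upwards [hbdd i] with ω hω using hω.1)
  have hYM : ∀ i, Y i ≤ᵐ[μ] fun _ => M := by
    intro i
    have := condExp_mono (m := ℱ i) (hXint i) (integrable_const M)
      (by filter_upwards [hbdd i] with ω hω using hω.2)
    rwa [condExp_const (ℱ.le i) M] at this
  have hae : ∀ᵐ ω ∂μ, ∀ i, (0 ≤ X i ω ∧ X i ω ≤ M) ∧ (0 ≤ Y i ω ∧ Y i ω ≤ M) := by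
    rw [ae_all_iff]
    intro i
    filter_upwards [hbdd i, hY0 i, hYM i] with ω h1 h2 h3
    exact ⟨h1, h2, h3⟩
  -- measurability
  have hSm : ∀ t, StronglyMeasurable[ℱ t] fun ω => ∑ i ∈ range t, X i ω := fun t =>
    Finset.stronglyMeasurable_fun_sum _ fun i hi => (hadp i).mono (ℱ.mono (mem_range.mp hi))
  have hTm : ∀ t, StronglyMeasurable[ℱ t] fun ω => ∑ i ∈ range t, Y i ω := fun t =>
    Finset.stronglyMeasurable_fun_sum _ fun i hi =>
      stronglyMeasurable_condExp.mono (ℱ.mono (mem_range.mp hi).le)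
  have hUm : ∀ t, StronglyMeasurable[ℱ t] (U t) := fun t =>
    ((hSm t).const_mul l).sub ((hTm t).const_mul c)
  have hUadp : Adapted ℱ U := fun t => (hUm t).measurable
  have hZm : ∀ t, StronglyMeasurable[ℱ t] (Z t) := fun t =>
    Real.continuous_exp.comp_stronglyMeasurable (hUm t)
  -- boundedness and integrability of Z
  have hZbdd : ∀ t, ∀ᵐ ω ∂μ, ‖Z t ω‖ ≤ Real.exp ((|l| + |c|) * (t * M)) := by
    intro t
    filter_upwards [hae] with ω hω
    have hS0 : 0 ≤ ∑ i ∈ range t, X i ω := sum_nonneg fun i _ => (hω i).1.1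
    have hSM : ∑ i ∈ range t, X i ω ≤ t * M := by
      calc ∑ i ∈ range t, X i ω ≤ ∑ _i ∈ range t, M := sum_le_sum fun i _ => (hω i).1.2
        _ = t * M := by simp [mul_comm]
    have hT0 : 0 ≤ ∑ i ∈ range t, Y i ω := sum_nonneg fun i _ => (hω i).2.1
    have hTM : ∑ i ∈ range t, Y i ω ≤ t * M := by
      calc ∑ i ∈ range t, Y i ω ≤ ∑ _i ∈ range t, M := sum_le_sum fun i _ => (hω i).2.2
        _ = t * M := by simp [mul_comm]
    rw [Real.norm_eq_abs, hZdef, abs_of_pos (Real.exp_pos _), Real.exp_le_exp]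
    have k1 : l * (∑ i ∈ range t, X i ω) ≤ |l| * (t * M) :=
      le_trans (mul_le_mul_of_nonneg_right (le_abs_self l) hS0)
        (mul_le_mul_of_nonneg_left hSM (abs_nonneg l))
    have k2 : -c * (∑ i ∈ range t, Y i ω) ≤ |c| * (t * M) :=
      le_trans (mul_le_mul_of_nonneg_right (neg_le_abs c) hT0)
        (mul_le_mul_of_nonneg_left hTM (abs_nonneg c))
    simp only [hUdef]
    nlinarith [k1, k2]
  have hZint : ∀ t, Integrable (Z t) μ := fun t =>
    Integrable.mono' (integrable_const _) ((hZm t).mono (ℱ.le t)).aestronglyMeasurable (hZbdd t)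
  -- one-step supermartingale inequality
  have hstep : ∀ t, μ[Z (t + 1) | ℱ t] ≤ᵐ[μ] Z t := by
    intro t
    set V : Ω → ℝ := fun ω => Real.exp (l * X t ω - c * Y t ω) with hVdef
    have hZsucc : Z (t + 1) = Z t * V := by
      funext ω
      simp only [hZdef, hVdef, hUdef, Pi.mul_apply, sum_range_succ]
      rw [← Real.exp_add]; ring_nf
    have hVm : AEStronglyMeasurable V μ := by
      refine (Real.continuous_exp.comp_stronglyMeasurable ?_).aestronglyMeasurable
      exact (((hadp t).mono (ℱ.le _)).const_mul l).sub
        ((stronglyMeasurable_condExp.mono (ℱ.le t)).const_mul c)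
    have hVbdd : ∀ᵐ ω ∂μ, ‖V ω‖ ≤ Real.exp (|l| * M + |c| * M) := by
      filter_upwards [hae] with ω hω
      rw [Real.norm_eq_abs, hVdef, abs_of_pos (Real.exp_pos _), Real.exp_le_exp]
      have k1 : l * X t ω ≤ |l| * M :=
        le_trans (mul_le_mul_of_nonneg_right (le_abs_self l) (hω t).1.1)
          (mul_le_mul_of_nonneg_left (hω t).1.2 (abs_nonneg l))
      have k2 : -c * Y t ω ≤ |c| * M :=
        le_trans (mul_le_mul_of_nonneg_right (neg_le_abs c) (hω t).2.1)
          (mul_le_mul_of_nonneg_left (hω t).2.2 (abs_nonneg c))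
      nlinarith [k1, k2]
    have hVint : Integrable V μ := Integrable.mono' (integrable_const _) hVm hVbdd
    have hexpXm : AEStronglyMeasurable (fun ω => Real.exp (l * X t ω)) μ :=
      (Real.continuous_exp.comp_stronglyMeasurable
        (((hadp t).mono (ℱ.le _)).const_mul l)).aestronglyMeasurable
    have hexpXint : Integrable (fun ω => Real.exp (l * X t ω)) μ := by
      refine Integrable.mono' (integrable_const (Real.exp (|l| * M))) hexpXm ?_
      filter_upwards [hbdd t] with ω hω
      rw [Real.norm_eq_abs, abs_of_pos (Real.exp_pos _), Real.exp_le_exp]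
      exact le_trans (mul_le_mul_of_nonneg_right (le_abs_self l) hω.1)
        (mul_le_mul_of_nonneg_left hω.2 (abs_nonneg l))
    have hmul1 : μ[Z (t + 1) | ℱ t] =ᵐ[μ] Z t * μ[V | ℱ t] := by
      rw [hZsucc]
      exact condExp_mul_of_stronglyMeasurable_left (hZm t) (hZsucc ▸ hZint (t + 1)) hVint
    have hVsplit : V = (fun ω => Real.exp (-(c * Y t ω))) * fun ω => Real.exp (l * X t ω) := by
      funext ω
      simp only [Pi.mul_apply, hVdef]
      rw [← Real.exp_add]; ring_nf
    have hem : StronglyMeasurable[ℱ t] fun ω => Real.exp (-(c * Y t ω)) :=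
      Real.continuous_exp.comp_stronglyMeasurable (stronglyMeasurable_condExp.const_mul c).neg
    have hmul2 : μ[V | ℱ t] =ᵐ[μ]
        (fun ω => Real.exp (-(c * Y t ω))) * μ[fun ω => Real.exp (l * X t ω) | ℱ t] := by
      have := condExp_mul_of_stronglyMeasurable_left hem (hVsplit ▸ hVint) hexpXint
      rwa [← hVsplit] at this
    have hcond : μ[fun ω => Real.exp (l * X t ω) | ℱ t] ≤ᵐ[μ] fun ω => 1 + c * Y t ω := by
      have hle : (fun ω => Real.exp (l * X t ω)) ≤ᵐ[μ] fun ω => 1 + c * X t ω := by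
        filter_upwards [hbdd t] with ω hω using hc _ hω.1 hω.2
      have hint2 : Integrable (fun ω => 1 + c * X t ω) μ := by
        have : Integrable ((fun _ => (1 : ℝ)) + fun ω => c * X t ω) μ :=
          (integrable_const 1).add ((hXint t).const_mul c)
        simpa [Pi.add_apply] using this
      have h1 := condExp_mono (m := ℱ t) hexpXint hint2 hle
      have h2 : μ[fun ω => 1 + c * X t ω | ℱ t] =ᵐ[μ] fun ω => 1 + c * Y t ω := by
        have e1 : (fun ω => 1 + c * X t ω) = (fun _ => (1 : ℝ)) + c • X t := by
          funext ω; simp [smul_eq_mul]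
        rw [e1]
        refine (condExp_add (integrable_const 1) ((hXint t).smul c) _).trans ?_
        rw [condExp_const (ℱ.le t) (1 : ℝ)]
        refine (Filter.EventuallyEq.add Filter.EventuallyEq.rfl (condExp_smul c (X t) _)).trans ?_
        refine Filter.Eventually.of_forall fun ω => ?_
        simp [smul_eq_mul, hYdef]
      exact h1.trans h2.le
    refine hmul1.le.trans ?_
    filter_upwards [hmul2, hcond] with ω h2 h3
    have hZnn : 0 ≤ Z t ω := by simp only [hZdef]; positivity
    have hq : (μ[V | ℱ t]) ω ≤ 1 := by
      rw [h2]
      simp only [Pi.mul_apply]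
      have hC : (μ[fun ω => Real.exp (l * X t ω) | ℱ t]) ω ≤ 1 + c * Y t ω := h3
      calc Real.exp (-(c * Y t ω)) * (μ[fun ω => Real.exp (l * X t ω) | ℱ t]) ω
          ≤ Real.exp (-(c * Y t ω)) * (1 + c * Y t ω) :=
            mul_le_mul_of_nonneg_left hC (Real.exp_nonneg _)
        _ ≤ Real.exp (-(c * Y t ω)) * Real.exp (c * Y t ω) := by
            have := Real.add_one_le_exp (c * Y t ω)
            exact mul_le_mul_of_nonneg_left (by linarith) (Real.exp_nonneg _)
        _ = 1 := by rw [← Real.exp_add]; simp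
    calc (Z t * μ[V | ℱ t]) ω = Z t ω * (μ[V | ℱ t]) ω := rfl
      _ ≤ Z t ω * 1 := mul_le_mul_of_nonneg_left hq hZnn
      _ = Z t ω := mul_one _
  have hsuper : Supermartingale Z ℱ μ := supermartingale_nat (fun t => hZm t) hZint hstep
  -- optional stopping bound for the truncated event
  have hEn : ∀ n : ℕ, μ {ω | ∃ j ≤ n, a ≤ U j ω} ≤ ENNReal.ofReal (Real.exp (-a)) := by
    intro n
    set τ : Ω → ℕ∞ := fun ω => (hittingBtwn U (Set.Ici a) 0 n ω : ℕ) with hτdef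
    have hτ : IsStoppingTime ℱ τ := hUadp.isStoppingTime_hittingBtwn measurableSet_Ici
    have hτ_le : ∀ ω, τ ω ≤ n := fun ω => by
      show ((hittingBtwn U (Set.Ici a) 0 n ω : ℕ) : ℕ∞) ≤ n; exact WithTop.coe_le_coe.2 (hittingBtwn_le (u := U) (s := Set.Ici a) (n := 0) (m := n) ω)
    have hsv_int : Integrable (stoppedValue Z τ) μ := integrable_stoppedValue ℕ hτ hZint hτ_le
    have hsv_nonneg : ∀ ω, 0 ≤ stoppedValue Z τ ω := by
      intro ω
      show 0 ≤ Z (hittingBtwn U (Set.Ici a) 0 n ω) ω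
      simp only [hZdef]; positivity
    have hZ0 : Z 0 = fun _ => (1 : ℝ) := by
      funext ω; simp [hZdef, hUdef]
    have hsv_le_one : ∫ ω, stoppedValue Z τ ω ∂μ ≤ 1 := by
      have hmono := hsuper.neg.expected_stoppedValue_mono (isStoppingTime_const ℱ 0) hτ
        (fun ω => WithTop.coe_le_coe.2 (Nat.zero_le _)) hτ_le
      rw [stoppedValue_const] at hmono
      have e1 : stoppedValue (-Z) τ = -stoppedValue Z τ := rfl
      have e2 : (-Z) 0 = fun _ => (-1 : ℝ) := by
        funext ω; simp [hZ0]
      rw [e1, e2] at hmono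
      simp only [Pi.neg_apply, integral_neg, integral_const, measure_univ, ENNReal.toReal_one, probReal_univ,
        smul_eq_mul, one_mul] at hmono
      linarith
    set E : Set Ω := {ω | ∃ j ≤ n, a ≤ U j ω} with hEdef
    have hEmeas : MeasurableSet E := by
      have : E = ⋃ j ∈ Set.Iic n, {ω | a ≤ U j ω} := by
        ext ω; simp [hEdef]
      rw [this]
      exact MeasurableSet.biUnion (Set.to_countable _) fun j _ =>
        measurableSet_le measurable_const ((hUm j).mono (ℱ.le j)).measurable
    have hEge : ∀ ω ∈ E, Real.exp a ≤ stoppedValue Z τ ω := by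
      rintro ω ⟨j, hjn, hj⟩
      have hmem : U (hittingBtwn U (Set.Ici a) 0 n ω) ω ∈ Set.Ici a :=
        hittingBtwn_mem_set ⟨j, ⟨Nat.zero_le _, hjn⟩, hj⟩
      show Real.exp a ≤ Z (hittingBtwn U (Set.Ici a) 0 n ω) ω
      simp only [hZdef]
      exact Real.exp_le_exp.2 hmem
    have key : (μ E).toReal * Real.exp a ≤ 1 := by
      have h1 : ∫ _ω in E, Real.exp a ∂μ ≤ ∫ ω in E, stoppedValue Z τ ω ∂μ :=
        setIntegral_mono_on (integrableOn_const (measure_ne_top μ E))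
          hsv_int.integrableOn hEmeas hEge
      have h2 : ∫ ω in E, stoppedValue Z τ ω ∂μ ≤ ∫ ω, stoppedValue Z τ ω ∂μ :=
        setIntegral_le_integral hsv_int (Filter.Eventually.of_forall hsv_nonneg)
      rw [setIntegral_const, smul_eq_mul, measureReal_def] at h1
      linarith
    rw [ENNReal.le_ofReal_iff_toReal_le (measure_ne_top μ E) (Real.exp_nonneg _),
      Real.exp_neg, inv_eq_one_div, le_div_iff₀ (Real.exp_pos a)]
    exact key
  -- pass to the limit
  have hEq : {ω | ∃ t : ℕ, a ≤ U t ω} = ⋃ n, {ω | ∃ j ≤ n, a ≤ U j ω} := by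
    ext ω
    simp only [Set.mem_setOf_eq, Set.mem_iUnion]
    exact ⟨fun ⟨t, ht⟩ => ⟨t, t, le_refl t, ht⟩, fun ⟨n, j, _, hj⟩ => ⟨j, hj⟩⟩
  have hgoal : μ {ω | ∃ t : ℕ, a ≤ U t ω} ≤ ENNReal.ofReal (Real.exp (-a)) := by
    rw [hEq, Directed.measure_iUnion (Monotone.directed_le fun m n hmn ω => by
      rintro ⟨j, hj, hja⟩; exact ⟨j, hj.trans hmn, hja⟩)]
    exact iSup_le hEn
  exact hgoal



set_option maxHeartbeats 1000000 in
theorem main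
    {Ω : Type*} {m0 : MeasurableSpace Ω} {μ : Measure Ω} [IsProbabilityMeasure μ]
    (ℱ : Filtration ℕ m0) (X Y : ℕ → Ω → ℝ) (M : ℝ) (hM : 0 < M)
    (hadp : ∀ i : ℕ, StronglyMeasurable[ℱ (i + 1)] (X i))
    (hbdd : ∀ i : ℕ, ∀ᵐ ω ∂μ, 0 ≤ X i ω ∧ X i ω ≤ M)
    (hY : ∀ i : ℕ, Y i =ᵐ[μ] μ[X i | ℱ i])
    (ε : ℝ) (hε0 : 0 < ε) (hε : ε ≤ 1 / 2)
    (h : ℝ) (hh : 0 < h) :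
    (μ {ω | ∃ t : ℕ,
        ε ≤ |(∑ i ∈ Finset.range t, X i ω) / (∑ i ∈ Finset.range t, Y i ω) - 1| ∧
        h ≤ ∑ i ∈ Finset.range t, Y i ω}).toReal
      ≤ Real.exp (-(h * ε ^ 2) / (5 * M) + 2) := by
  classical
  set l₁ : ℝ := ε / (2 * M) with hl₁
  set l₂ : ℝ := -(ε / M) with hl₂
  set c₁ : ℝ := (Real.exp (l₁ * M) - 1) / M with hc₁
  set c₂ : ℝ := (Real.exp (l₂ * M) - 1) / M with hc₂
  have hl₁M : l₁ * M = ε / 2 := by rw [hl₁]; field_simp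
  have hl₂M : l₂ * M = -ε := by rw [hl₂]; field_simp
  have hl₁0 : 0 ≤ l₁ := by rw [hl₁]; positivity
  have hl₂0 : l₂ ≤ 0 := by
    rw [hl₂, neg_nonpos]; positivity
  have hcc₁ : ∀ x : ℝ, 0 ≤ x → x ≤ M → Real.exp (l₁ * x) ≤ 1 + c₁ * x := fun x h1 h2 =>
    chord hM l₁ h1 h2
  have hcc₂ : ∀ x : ℝ, 0 ≤ x → x ≤ M → Real.exp (l₂ * x) ≤ 1 + c₂ * x := fun x h1 h2 =>
    chord hM l₂ h1 h2
  -- lower bounds on the exponents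
  have hq₁ : Real.exp (ε / 2) ≤ 1 + ε / 2 + 3 / 4 * (ε / 2) ^ 2 :=
    exp_quad (by rw [abs_of_nonneg (by linarith)]; linarith)
  have hq₂ : Real.exp (-ε) ≤ 1 + -ε + 3 / 4 * (-ε) ^ 2 :=
    exp_quad (by rw [abs_neg, abs_of_nonneg hε0.le]; linarith)
  have hγ₁ : ε ^ 2 / (5 * M) ≤ (1 + ε) * l₁ - c₁ := by
    have key : ε ^ 2 / 5 ≤ (1 + ε) * (ε / 2) - (Real.exp (ε / 2) - 1) := by nlinarith [hq₁]
    have e1 : ε ^ 2 / (5 * M) = ε ^ 2 / 5 / M := by ring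
    have e2 : (1 + ε) * l₁ - c₁ = ((1 + ε) * (ε / 2) - (Real.exp (ε / 2) - 1)) / M := by
      rw [hc₁, hl₁M, hl₁]; ring
    rw [e1, e2]
    exact (div_le_div_iff_of_pos_right hM).2 key
  have hγ₂ : ε ^ 2 / (5 * M) ≤ (1 - ε) * l₂ - c₂ := by
    have key : ε ^ 2 / 5 ≤ (1 - ε) * (-ε) - (Real.exp (-ε) - 1) := by nlinarith [hq₂]
    have e1 : ε ^ 2 / (5 * M) = ε ^ 2 / 5 / M := by ring
    have e2 : (1 - ε) * l₂ - c₂ = ((1 - ε) * (-ε) - (Real.exp (-ε) - 1)) / M := by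
      rw [hc₂, hl₂M, hl₂]; ring
    rw [e1, e2]
    exact (div_le_div_iff_of_pos_right hM).2 key
  have hγ₁0 : 0 ≤ (1 + ε) * l₁ - c₁ := le_trans (by positivity) hγ₁
  have hγ₂0 : 0 ≤ (1 - ε) * l₂ - c₂ := le_trans (by positivity) hγ₂
  -- the two one-sided events
  have hb₁ := core ℱ X M hM hadp hbdd l₁ c₁ (((1 + ε) * l₁ - c₁) * h) hcc₁
  have hb₂ := core ℱ X M hM hadp hbdd l₂ c₂ (((1 - ε) * l₂ - c₂) * h) hcc₂
  set E₁ : Set Ω := {ω | ∃ t : ℕ, ((1 + ε) * l₁ - c₁) * h ≤ l₁ * (∑ i ∈ range t, X i ω)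
      - c₁ * (∑ i ∈ range t, (μ[X i | ℱ i]) ω)} with hE₁
  set E₂ : Set Ω := {ω | ∃ t : ℕ, ((1 - ε) * l₂ - c₂) * h ≤ l₂ * (∑ i ∈ range t, X i ω)
      - c₂ * (∑ i ∈ range t, (μ[X i | ℱ i]) ω)} with hE₂
  set G : Set Ω := {ω | ∀ i, Y i ω = (μ[X i | ℱ i]) ω} with hGdef
  have hGc : μ Gᶜ = 0 := by
    have h' : ∀ᵐ ω ∂μ, ω ∈ G := ae_all_iff.2 hY
    exact ae_iff.1 h'
  have hsub : {ω | ∃ t : ℕ,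
        ε ≤ |(∑ i ∈ Finset.range t, X i ω) / (∑ i ∈ Finset.range t, Y i ω) - 1| ∧
        h ≤ ∑ i ∈ Finset.range t, Y i ω} ⊆ (E₁ ∪ E₂) ∪ Gᶜ := by
    intro ω hω
    by_cases hGω : ω ∈ G
    · left
      obtain ⟨t, hdev, hhT⟩ := hω
      have hTT : ∑ i ∈ range t, Y i ω = ∑ i ∈ range t, (μ[X i | ℱ i]) ω :=
        Finset.sum_congr rfl fun i _ => hGω i
      set S : ℝ := ∑ i ∈ range t, X i ω with hS
      set T : ℝ := ∑ i ∈ range t, Y i ω with hT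
      have hT0 : 0 < T := lt_of_lt_of_le hh hhT
      rcases le_abs.mp hdev with h1 | h1
      · -- upper deviation
        left
        refine ⟨t, ?_⟩
        rw [← hTT]
        have hge : (1 + ε) * T ≤ S := (le_div_iff₀ hT0).1 (by linarith)
        have k1 : l₁ * ((1 + ε) * T) ≤ l₁ * S := mul_le_mul_of_nonneg_left hge hl₁0
        have k2 : ((1 + ε) * l₁ - c₁) * h ≤ ((1 + ε) * l₁ - c₁) * T :=
          mul_le_mul_of_nonneg_left hhT hγ₁0
        nlinarith [k1, k2]
      · -- lower deviation
        right
        refine ⟨t, ?_⟩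
        rw [← hTT]
        have hle' : S ≤ (1 - ε) * T := by
          have : S / T ≤ 1 - ε := by linarith
          exact (div_le_iff₀ hT0).1 this
        have k1 : l₂ * ((1 - ε) * T) ≤ l₂ * S := mul_le_mul_of_nonpos_left hle' hl₂0
        have k2 : ((1 - ε) * l₂ - c₂) * h ≤ ((1 - ε) * l₂ - c₂) * T :=
          mul_le_mul_of_nonneg_left hhT hγ₂0
        nlinarith [k1, k2]
    · right; exact hGω
  -- assemble
  have hfin : Real.exp (-(((1 + ε) * l₁ - c₁) * h)) + Real.exp (-(((1 - ε) * l₂ - c₂) * h))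
      ≤ Real.exp (-(h * ε ^ 2) / (5 * M) + 2) := by
    have k1 : -(((1 + ε) * l₁ - c₁) * h) ≤ -(h * ε ^ 2) / (5 * M) := by
      have := mul_le_mul_of_nonneg_right hγ₁ hh.le
      have e : ε ^ 2 / (5 * M) * h = h * ε ^ 2 / (5 * M) := by ring
      rw [e] at this
      rw [neg_div]
      exact neg_le_neg this
    have k2 : -(((1 - ε) * l₂ - c₂) * h) ≤ -(h * ε ^ 2) / (5 * M) := by
      have := mul_le_mul_of_nonneg_right hγ₂ hh.le
      have e : ε ^ 2 / (5 * M) * h = h * ε ^ 2 / (5 * M) := by ring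
      rw [e] at this
      rw [neg_div]
      exact neg_le_neg this
    have h2e : (2 : ℝ) ≤ Real.exp 2 := by linarith [Real.add_one_le_exp (2 : ℝ)]
    calc Real.exp (-(((1 + ε) * l₁ - c₁) * h)) + Real.exp (-(((1 - ε) * l₂ - c₂) * h))
        ≤ Real.exp (-(h * ε ^ 2) / (5 * M)) + Real.exp (-(h * ε ^ 2) / (5 * M)) :=
          add_le_add (Real.exp_le_exp.2 k1) (Real.exp_le_exp.2 k2)
      _ = 2 * Real.exp (-(h * ε ^ 2) / (5 * M)) := by ring
      _ ≤ Real.exp 2 * Real.exp (-(h * ε ^ 2) / (5 * M)) :=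
          mul_le_mul_of_nonneg_right h2e (Real.exp_nonneg _)
      _ = Real.exp (-(h * ε ^ 2) / (5 * M) + 2) := by rw [← Real.exp_add]; ring_nf
  have hμ : μ {ω | ∃ t : ℕ,
        ε ≤ |(∑ i ∈ Finset.range t, X i ω) / (∑ i ∈ Finset.range t, Y i ω) - 1| ∧
        h ≤ ∑ i ∈ Finset.range t, Y i ω}
      ≤ ENNReal.ofReal (Real.exp (-(h * ε ^ 2) / (5 * M) + 2)) := by
    calc μ {ω | ∃ t : ℕ,
        ε ≤ |(∑ i ∈ Finset.range t, X i ω) / (∑ i ∈ Finset.range t, Y i ω) - 1| ∧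
        h ≤ ∑ i ∈ Finset.range t, Y i ω}
        ≤ μ ((E₁ ∪ E₂) ∪ Gᶜ) := measure_mono hsub
      _ ≤ μ (E₁ ∪ E₂) + μ Gᶜ := measure_union_le _ _
      _ = μ (E₁ ∪ E₂) := by rw [hGc, add_zero]
      _ ≤ μ E₁ + μ E₂ := measure_union_le _ _
      _ ≤ ENNReal.ofReal (Real.exp (-(((1 + ε) * l₁ - c₁) * h)))
          + ENNReal.ofReal (Real.exp (-(((1 - ε) * l₂ - c₂) * h))) := add_le_add hb₁ hb₂
      _ = ENNReal.ofReal (Real.exp (-(((1 + ε) * l₁ - c₁) * h))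
          + Real.exp (-(((1 - ε) * l₂ - c₂) * h))) :=
          (ENNReal.ofReal_add (Real.exp_nonneg _) (Real.exp_nonneg _)).symm
      _ ≤ ENNReal.ofReal (Real.exp (-(h * ε ^ 2) / (5 * M) + 2)) :=
          ENNReal.ofReal_le_ofReal hfin
  exact ENNReal.toReal_le_of_le_ofReal (Real.exp_nonneg _) hμ

end PropPredAux


/-- General-`ε` form of the large deviation inequality: for uniformly bounded nonnegative
random variables `X i` (the `(i+1)`-st variable, `ℱ (i+1)`-measurable) with one-step
predictions `Y i = E[X i | ℱ i]`, for any `0 < ε ≤ 1/2` and `h > 0`, the probability that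
for some `t` the ratio of partial sums deviates from `1` by at least `ε` while the sum of
predictions is at least `h` is at most `exp (-hε²/(5M) + 2)`. -/
theorem prop_predictions_general
    {Ω : Type*} {m0 : MeasurableSpace Ω} {μ : Measure Ω} [IsProbabilityMeasure μ]
    (ℱ : Filtration ℕ m0) (X Y : ℕ → Ω → ℝ) (M : ℝ) (hM : 0 < M)
    (hadp : ∀ i : ℕ, StronglyMeasurable[ℱ (i + 1)] (X i))
    (hbdd : ∀ i : ℕ, ∀ᵐ ω ∂μ, 0 ≤ X i ω ∧ X i ω ≤ M)
    (hY : ∀ i : ℕ, Y i =ᵐ[μ] μ[X i | ℱ i])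
    (ε : ℝ) (hε0 : 0 < ε) (hε : ε ≤ 1 / 2)
    (h : ℝ) (hh : 0 < h) :
    (μ {ω | ∃ t : ℕ,
        ε ≤ |(∑ i ∈ Finset.range t, X i ω) / (∑ i ∈ Finset.range t, Y i ω) - 1| ∧
        h ≤ ∑ i ∈ Finset.range t, Y i ω}).toReal
      ≤ Real.exp (-(h * ε ^ 2) / (5 * M) + 2) :=
  PropPredAux.main ℱ X Y M hM hadp hbdd hY ε hε0 hε h hh
end

section
/- In the relaxed adaptive allocation model with n bins, pool size at most 2^m and pool distributions μ_1,…,μ_N (N ≤ 2^m), define for each distribution ν on the bins and each time s: X_s^ν = Σ_{i≤s} ν(J_i) and V_s^ν = Σ_{i≤s} ⟨Q_i, ν⟩ = Σ_{i≤s} Σ_j Q_i(j)ν(j). Then with probability at least 1 − e^{2−4m}, simultaneously for every ν in the pool {μ_1,…,μ_N} and every s ≥ 1: if V_s^ν ≥ 100·‖ν‖_∞·m then X_s^ν ≥ V_s^ν/2. -/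
open MeasureTheory Finset

lemma integrable_of_abs_bound {Ω : Type*} {m0 : MeasurableSpace Ω} {μ : Measure Ω}
    [IsFiniteMeasure μ] {f : Ω → ℝ} (hm : AEStronglyMeasurable f μ) (C : ℝ)
    (h : ∀ ω, |f ω| ≤ C) : Integrable f μ :=
  (integrable_const C).mono' hm (Filter.Eventually.of_forall (by simpa using h))

lemma exp_convex_bound {u : ℝ} (h0 : 0 ≤ u) (h1 : u ≤ 1) :
    Real.exp (-u) ≤ 1 - (1 - Real.exp (-1)) * u := by
  have := convexOn_exp.2 (Set.mem_univ (0:ℝ)) (Set.mem_univ (-1:ℝ))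
    (by linarith : (0:ℝ) ≤ 1 - u) h0 (by ring)
  simp only [smul_eq_mul] at this
  calc Real.exp (-u) = Real.exp ((1-u) * 0 + u * (-1)) := by ring_nf
    _ ≤ (1-u) * Real.exp 0 + u * Real.exp (-1) := this
    _ = 1 - (1 - Real.exp (-1)) * u := by rw [Real.exp_zero]; ring

lemma exp_mul_one_sub_le (y : ℝ) : Real.exp y * (1 - y) ≤ 1 := by
  have h := Real.add_one_le_exp (-y)
  calc Real.exp y * (1 - y) ≤ Real.exp y * Real.exp (-y) :=
        mul_le_mul_of_nonneg_left (by linarith) (Real.exp_nonneg y)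
    _ = 1 := by rw [← Real.exp_add]; simp

lemma ville_aux {Ω : Type*} {m0 : MeasurableSpace Ω} {μ : Measure Ω} [IsFiniteMeasure μ]
    {ℱ : Filtration ℕ m0} {f : ℕ → Ω → ℝ} (hf : Supermartingale f ℱ μ)
    (hnonneg : ∀ s ω, 0 ≤ f s ω) {ε : ℝ} (hε : 0 < ε) :
    μ {ω | ∃ s, ε ≤ f s ω} ≤ ENNReal.ofReal ((∫ ω, f 0 ω ∂μ) / ε) := by
  have hfm : ∀ s, Measurable (f s) := fun s => ((hf.1 s).measurable).le (ℱ.le s)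
  set A : ℕ → Set Ω := fun N => {ω | ∃ j ≤ N, ε ≤ f j ω} with hA
  have hAmeas : ∀ N, MeasurableSet (A N) := by
    intro N
    have : A N = ⋃ j ∈ Finset.range (N+1), {ω | ε ≤ f j ω} := by
      ext ω; simp [hA, Nat.lt_succ_iff]
    rw [this]
    exact Finset.measurableSet_biUnion _ fun j _ => measurableSet_le measurable_const (hfm j)
  have hunion : {ω | ∃ s, ε ≤ f s ω} = ⋃ N, A N := by
    ext ω; constructor
    · rintro ⟨s, hs⟩; exact Set.mem_iUnion.2 ⟨s, s, le_rfl, hs⟩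
    · rintro h; obtain ⟨N, j, _, hj⟩ := Set.mem_iUnion.1 h; exact ⟨j, hj⟩
  rw [hunion]
  have hmono : Monotone A := by
    intro N M h ω; rintro ⟨j, hj, hfj⟩; exact ⟨j, hj.trans h, hfj⟩
  rw [Directed.measure_iUnion hmono.directed_le]
  refine iSup_le fun N => ?_
  set τ : Ω → WithTop ℕ := fun ω => (hittingBtwn f (Set.Ici ε) 0 N ω : ℕ) with hτdef
  have hτ : IsStoppingTime ℱ τ := Adapted.isStoppingTime_hittingBtwn hf.stronglyAdapted.adapted measurableSet_Ici
  have hτle : ∀ ω, τ ω ≤ N := fun ω => WithTop.coe_le_coe.2 (hittingBtwn_le ω)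
  have hint : Integrable (stoppedValue f τ) μ :=
    integrable_stoppedValue ℕ hτ hf.integrable hτle
  have hsv_nonneg : ∀ ω, 0 ≤ stoppedValue f τ ω := fun ω => hnonneg _ ω
  have hkey : ∀ ω ∈ A N, ε ≤ stoppedValue f τ ω := by
    rintro ω ⟨j, hj, hfj⟩
    exact stoppedValue_hittingBtwn_mem ⟨j, ⟨Nat.zero_le _, hj⟩, hfj⟩
  have h1 : ε * (μ (A N)).toReal ≤ ∫ ω in A N, stoppedValue f τ ω ∂μ :=
    by have := setIntegral_ge_of_const_le (hAmeas N) (measure_ne_top _ _) hkey hint.integrableOn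
       rw [smul_eq_mul, mul_comm] at this; exact this
  have h2 : ∫ ω in A N, stoppedValue f τ ω ∂μ ≤ ∫ ω, stoppedValue f τ ω ∂μ :=
    setIntegral_le_integral hint (Filter.Eventually.of_forall hsv_nonneg)
  have h3 : ∫ ω, stoppedValue f τ ω ∂μ ≤ ∫ ω, f 0 ω ∂μ := by
    have := hf.neg.expected_stoppedValue_mono
      (isStoppingTime_const ℱ 0) hτ (fun ω => WithTop.coe_le_coe.2 (Nat.zero_le _)) hτle
    have heq : stoppedValue (-f) (fun _ => ((0:ℕ) : WithTop ℕ)) = fun ω => -(f 0 ω) := rfl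
    have heq2 : stoppedValue (-f) τ = fun ω => -(stoppedValue f τ ω) := rfl
    change ∫ x, -(f 0 x) ∂μ ≤ ∫ x, -(stoppedValue f τ x) ∂μ at this
    rw [integral_neg, integral_neg] at this
    linarith
  have h4 : (μ (A N)).toReal ≤ (∫ ω, f 0 ω ∂μ) / ε := by
    rw [le_div_iff₀ hε]; nlinarith [h1, h2, h3]
  rw [ENNReal.le_ofReal_iff_toReal_le (measure_ne_top _ _)]
  · exact h4
  · exact le_trans (by positivity) h4

lemma condexp_comp_J {Ω : Type*} {m0 : MeasurableSpace Ω} {μ : Measure Ω} [IsProbabilityMeasure μ]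
    (ℱ : Filtration ℕ m0) {n : ℕ} (Q : ℕ → Ω → Fin n → ℝ) (J : ℕ → Ω → Fin n)
    (hJ_meas : ∀ t, Measurable[ℱ (t + 1)] (J t))
    (hJ_law : ∀ t i, (μ[(fun ω => if J t ω = i then (1 : ℝ) else 0) | ℱ t])
        =ᵐ[μ] fun ω => Q t ω i) (t : ℕ) (g : Fin n → ℝ) :
    μ[(fun ω => g (J t ω)) | ℱ t] =ᵐ[μ] fun ω => ∑ i, Q t ω i * g i := by
  have hJm : Measurable (J t) := (hJ_meas t).le (ℱ.le _)
  have hind_meas : ∀ i : Fin n, Measurable fun ω => if J t ω = i then (1:ℝ) else 0 := by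
    intro i
    have : Measurable ((fun j : Fin n => if j = i then (1:ℝ) else 0) ∘ J t) :=
      measurable_from_top.comp hJm
    simpa [Function.comp_def] using this
  have hind_int : ∀ i : Fin n, Integrable (fun ω => if J t ω = i then (1:ℝ) else 0) μ := by
    intro i
    refine (integrable_const (1:ℝ)).mono' (hind_meas i).aestronglyMeasurable ?_
    refine Filter.Eventually.of_forall fun ω => ?_
    by_cases h : J t ω = i <;> simp [h]
  have heq : (fun ω => g (J t ω)) = ∑ i : Fin n, (g i) • fun ω => if J t ω = i then (1:ℝ) else 0 := by
    funext ω
    simp only [Finset.sum_apply, Pi.smul_apply, smul_eq_mul, mul_ite, mul_one, mul_zero]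
    rw [Finset.sum_ite_eq Finset.univ (J t ω) g]
    simp
  rw [heq]
  have h1 := condExp_finsetSum (μ := μ) (m := ℱ t) (s := Finset.univ)
    (f := fun i => (g i) • fun ω => if J t ω = i then (1:ℝ) else 0)
    (fun i _ => (hind_int i).smul (g i))
  refine h1.trans ?_
  have h2 : ∀ᵐ ω ∂μ, ∀ i : Fin n,
      (μ[(g i) • fun ω => if J t ω = i then (1:ℝ) else 0 | ℱ t]) ω = g i * Q t ω i := by
    rw [ae_all_iff]
    intro i
    filter_upwards [condExp_smul (μ := μ) (m := ℱ t) (g i)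
      (fun ω => if J t ω = i then (1:ℝ) else 0), hJ_law t i] with ω hω hω2
    rw [hω]
    simp [hω2]
  filter_upwards [h2] with ω hω
  simp only [Finset.sum_apply]
  rw [Finset.sum_congr rfl fun i _ => hω i]
  exact Finset.sum_congr rfl fun i _ => mul_comm _ _

lemma key_nu {Ω : Type*} {m0 : MeasurableSpace Ω} {μ : Measure Ω} [IsProbabilityMeasure μ]
    (ℱ : Filtration ℕ m0) {n : ℕ}
    (Q : ℕ → Ω → Fin n → ℝ) (J : ℕ → Ω → Fin n)
    (hQ_nonneg : ∀ t ω i, 0 ≤ Q t ω i) (hQ_sum : ∀ t ω, ∑ i, Q t ω i = 1)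
    (hQ_meas : ∀ t i, Measurable[ℱ t] fun ω => Q t ω i)
    (hJ_meas : ∀ t, Measurable[ℱ (t + 1)] (J t))
    (hJ_law : ∀ t i, (μ[(fun ω => if J t ω = i then (1 : ℝ) else 0) | ℱ t])
        =ᵐ[μ] fun ω => Q t ω i)
    (ν : Fin n → ℝ) (hν0 : ∀ i, 0 ≤ ν i) (hν1 : ∑ i, ν i = 1)
    (c : ℝ) (hc : 0 ≤ c) :
    μ {ω | ∃ s : ℕ, c * (⨆ i, ν i) ≤ ∑ r ∈ Finset.range s, ∑ i, Q r ω i * ν i ∧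
        (∑ r ∈ Finset.range s, ν (J r ω)) < (∑ r ∈ Finset.range s, ∑ i, Q r ω i * ν i) / 2}
      ≤ ENNReal.ofReal (Real.exp (-((1/2 - Real.exp (-1)) * c))) := by
  classical
  obtain ⟨i0, hi0⟩ : ∃ i, 0 < ν i := by
    by_contra h
    push_neg at h
    have : (∑ i, ν i) ≤ 0 := Finset.sum_nonpos fun i _ => h i
    rw [hν1] at this; linarith
  have hbdd : BddAbove (Set.range ν) := (Set.finite_range ν).bddAbove
  set a : ℝ := ⨆ i, ν i with ha_def
  have hle_a : ∀ i, ν i ≤ a := fun i => le_ciSup hbdd i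
  have ha : 0 < a := lt_of_lt_of_le hi0 (hle_a i0)
  set θ : ℝ := 1 - Real.exp (-1) with hθ_def
  have hexp1 : Real.exp (-1) < 1/2 := by
    have h9 := Real.exp_one_gt_d9
    have hpos := Real.exp_pos 1
    rw [Real.exp_neg, inv_lt_comm₀ hpos (by norm_num)]
    linarith
  have hθhalf : 1/2 < θ := by simp only [hθ_def]; linarith
  have hθ1 : θ < 1 := by simp only [hθ_def]; have := Real.exp_pos (-1); linarith
  set p : ℕ → Ω → ℝ := fun t ω => ∑ i, Q t ω i * ν i with hp_def
  set V : ℕ → Ω → ℝ := fun s ω => ∑ r ∈ Finset.range s, p r ω with hV_def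
  set X : ℕ → Ω → ℝ := fun s ω => ∑ r ∈ Finset.range s, ν (J r ω) with hX_def
  set f : ℕ → Ω → ℝ := fun s ω => Real.exp ((θ * V s ω - X s ω) / a) with hf_def
  have hp_nonneg : ∀ t ω, 0 ≤ p t ω := fun t ω =>
    Finset.sum_nonneg fun i _ => mul_nonneg (hQ_nonneg t ω i) (hν0 i)
  have hp_le : ∀ t ω, p t ω ≤ a := by
    intro t ω
    calc p t ω ≤ ∑ i, Q t ω i * a :=
          Finset.sum_le_sum fun i _ => mul_le_mul_of_nonneg_left (hle_a i) (hQ_nonneg t ω i)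
      _ = a := by rw [← Finset.sum_mul, hQ_sum t ω, one_mul]
  have hX_nonneg : ∀ s ω, 0 ≤ X s ω := fun s ω => Finset.sum_nonneg fun r _ => hν0 _
  have hV_le : ∀ s ω, V s ω ≤ s * a := by
    intro s ω
    calc V s ω ≤ ∑ _r ∈ Finset.range s, a := Finset.sum_le_sum fun r _ => hp_le r ω
      _ = s * a := by rw [Finset.sum_const, Finset.card_range, nsmul_eq_mul]
  have hp_meas : ∀ t, Measurable[ℱ t] (p t) := fun t =>
    Finset.measurable_sum _ fun i _ => (hQ_meas t i).mul_const (ν i)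
  have hV_meas : ∀ s, Measurable[ℱ s] (V s) := fun s =>
    Finset.measurable_sum _ fun r hr =>
      (hp_meas r).le (ℱ.mono (le_of_lt (Finset.mem_range.1 hr)))
  have hX_meas : ∀ s, Measurable[ℱ s] (X s) := by
    intro s
    refine Finset.measurable_sum _ fun r hr => ?_
    have h1 : Measurable[ℱ s] (J r) := (hJ_meas r).le (ℱ.mono (Finset.mem_range.1 hr))
    have : Measurable[ℱ s] (ν ∘ J r) := measurable_from_top.comp h1
    simpa [Function.comp_def] using this
  have hf_meas : ∀ s, Measurable[ℱ s] (f s) := fun s =>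
    Real.measurable_exp.comp ((((hV_meas s).const_mul θ).sub (hX_meas s)).div_const a)
  have hf_pos : ∀ s ω, 0 < f s ω := fun s ω => Real.exp_pos _
  have hf_bound : ∀ s ω, f s ω ≤ Real.exp (θ * s) := by
    intro s ω
    apply Real.exp_le_exp.2
    rw [div_le_iff₀ ha]
    have h1 : θ * V s ω ≤ θ * (s * a) :=
      mul_le_mul_of_nonneg_left (hV_le s ω) (by linarith)
    have := hX_nonneg s ω
    nlinarith
  have hf_int : ∀ s, Integrable (f s) μ := by
    intro s
    refine integrable_of_abs_bound (((hf_meas s).le (ℱ.le s)).aestronglyMeasurable)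
      (Real.exp (θ * s)) fun ω => ?_
    rw [abs_of_pos (hf_pos s ω)]
    exact hf_bound s ω
  have hsuper : Supermartingale f ℱ μ := by
    refine supermartingale_nat (fun s => (hf_meas s).stronglyMeasurable) hf_int fun t => ?_
    set G : Ω → ℝ := fun ω => f t ω * Real.exp (θ * p t ω / a) with hG_def
    set g : Fin n → ℝ := fun i => Real.exp (-(ν i) / a) with hg_def
    have hfeq : f (t+1) = G * fun ω => g (J t ω) := by
      funext ω
      simp only [Pi.mul_apply, hG_def, hg_def, hf_def]
      rw [← Real.exp_add, ← Real.exp_add]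
      congr 1
      have hV1 : V (t+1) ω = V t ω + p t ω := by
        simp only [hV_def]; rw [Finset.sum_range_succ]
      have hX1 : X (t+1) ω = X t ω + ν (J t ω) := by
        simp only [hX_def]; rw [Finset.sum_range_succ]
      rw [hV1, hX1]
      field_simp
      ring
    have hG_meas : StronglyMeasurable[ℱ t] G :=
      ((hf_meas t).mul
        (Real.measurable_exp.comp (((hp_meas t).const_mul θ).div_const a))).stronglyMeasurable
    have hgJ_meas : Measurable fun ω => g (J t ω) := by
      have : Measurable (g ∘ J t) := measurable_from_top.comp ((hJ_meas t).le (ℱ.le _))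
      simpa [Function.comp_def] using this
    have hgJ_int : Integrable (fun ω => g (J t ω)) μ := by
      refine integrable_of_abs_bound hgJ_meas.aestronglyMeasurable 1 fun ω => ?_
      rw [abs_of_pos (Real.exp_pos _)]
      refine Real.exp_le_one_iff.2 ?_
      exact div_nonpos_of_nonpos_of_nonneg (neg_nonpos.2 (hν0 _)) ha.le
    have hmul_int : Integrable (G * fun ω => g (J t ω)) μ := by
      rw [← hfeq]; exact hf_int (t+1)
    have hcemul := condExp_mul_of_stronglyMeasurable_left hG_meas hmul_int hgJ_int
    have hcomp := condexp_comp_J ℱ Q J hJ_meas hJ_law t g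
    rw [hfeq]
    refine hcemul.le.trans ?_
    filter_upwards [hcomp] with ω hω
    rw [Pi.mul_apply, hω]
    have hS_le : ∑ i, Q t ω i * g i ≤ 1 - θ * p t ω / a := by
      have h1 : ∀ i, g i ≤ 1 - θ * (ν i / a) := by
        intro i
        have hu0 : 0 ≤ ν i / a := div_nonneg (hν0 i) ha.le
        have hu1 : ν i / a ≤ 1 := (div_le_one ha).2 (hle_a i)
        have := exp_convex_bound hu0 hu1
        simpa [hg_def, neg_div, hθ_def] using this
      calc ∑ i, Q t ω i * g i ≤ ∑ i, Q t ω i * (1 - θ * (ν i / a)) :=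
            Finset.sum_le_sum fun i _ => mul_le_mul_of_nonneg_left (h1 i) (hQ_nonneg t ω i)
        _ = 1 - θ * p t ω / a := by
            simp only [mul_sub, mul_one]
            rw [Finset.sum_sub_distrib, hQ_sum t ω]
            congr 1
            have : p t ω = ∑ i, Q t ω i * ν i := rfl
            rw [this, Finset.mul_sum, Finset.sum_div]
            exact Finset.sum_congr rfl fun i _ => by ring
    have hkey : Real.exp (θ * p t ω / a) * (∑ i, Q t ω i * g i) ≤ 1 := by
      calc Real.exp (θ * p t ω / a) * (∑ i, Q t ω i * g i)
          ≤ Real.exp (θ * p t ω / a) * (1 - θ * p t ω / a) :=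
            mul_le_mul_of_nonneg_left hS_le (Real.exp_nonneg _)
        _ ≤ 1 := exp_mul_one_sub_le _
    calc G ω * ∑ i, Q t ω i * g i
        = f t ω * (Real.exp (θ * p t ω / a) * ∑ i, Q t ω i * g i) := by
          simp only [hG_def]; ring
      _ ≤ f t ω * 1 := mul_le_mul_of_nonneg_left hkey (hf_pos t ω).le
      _ = f t ω := mul_one _
  set ε : ℝ := Real.exp ((θ - 1/2) * c) with hε_def
  have hε : 0 < ε := Real.exp_pos _
  have hsub : {ω | ∃ s : ℕ, c * a ≤ ∑ r ∈ Finset.range s, ∑ i, Q r ω i * ν i ∧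
        (∑ r ∈ Finset.range s, ν (J r ω)) < (∑ r ∈ Finset.range s, ∑ i, Q r ω i * ν i) / 2}
      ⊆ {ω | ∃ s, ε ≤ f s ω} := by
    rintro ω ⟨s, h1, h2⟩
    have hVs : V s ω = ∑ r ∈ Finset.range s, ∑ i, Q r ω i * ν i := rfl
    have hXs : X s ω = ∑ r ∈ Finset.range s, ν (J r ω) := rfl
    rw [← hVs] at h1 h2
    rw [← hXs] at h2
    refine ⟨s, ?_⟩
    show Real.exp ((θ - 1/2) * c) ≤ Real.exp ((θ * V s ω - X s ω) / a)
    apply Real.exp_le_exp.2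
    rw [le_div_iff₀ ha]
    have h3 : (θ - 1/2) * (c * a) ≤ (θ - 1/2) * V s ω :=
      mul_le_mul_of_nonneg_left h1 (by linarith)
    nlinarith
  calc μ {ω | ∃ s : ℕ, c * a ≤ ∑ r ∈ Finset.range s, ∑ i, Q r ω i * ν i ∧
        (∑ r ∈ Finset.range s, ν (J r ω)) < (∑ r ∈ Finset.range s, ∑ i, Q r ω i * ν i) / 2}
      ≤ μ {ω | ∃ s, ε ≤ f s ω} := measure_mono hsub
    _ ≤ ENNReal.ofReal ((∫ ω, f 0 ω ∂μ) / ε) :=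
        ville_aux hsuper (fun s ω => (hf_pos s ω).le) hε
    _ = ENNReal.ofReal (Real.exp (-((1/2 - Real.exp (-1)) * c))) := by
        have h0 : (∫ ω, f 0 ω ∂μ) = 1 := by
          have : f 0 = fun _ : Ω => (1:ℝ) := by
            funext ω
            simp [hf_def, hV_def, hX_def]
          rw [this]
          simp
        rw [h0, hε_def, one_div, ← Real.exp_neg]
        congr 2
        simp only [hθ_def]
        ring

lemma numeric_bound (m : ℕ) :
    (2:ℝ)^m * Real.exp (-((1/2 - Real.exp (-1)) * (100 * m))) ≤ Real.exp (2 - 4*m) := by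
  have h9 := Real.exp_one_gt_d9
  have hpos := Real.exp_pos 1
  have he : Real.exp (-1) < 0.372 := by
    rw [Real.exp_neg, inv_lt_comm₀ hpos (by norm_num)]
    linarith
  have h2e : (2:ℝ) ≤ Real.exp 1 := by linarith
  have hm0 : (0:ℝ) ≤ (m:ℝ) := Nat.cast_nonneg m
  have hp : (2:ℝ)^m ≤ Real.exp 1 ^ m := pow_le_pow_left₀ (by norm_num) h2e m
  have hexpm : Real.exp 1 ^ m = Real.exp m := by
    rw [← Real.exp_nat_mul]; norm_num
  calc (2:ℝ)^m * Real.exp (-((1/2 - Real.exp (-1)) * (100 * m)))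
      ≤ Real.exp m * Real.exp (-((1/2 - Real.exp (-1)) * (100 * m))) := by
        rw [← hexpm]
        exact mul_le_mul_of_nonneg_right hp (Real.exp_nonneg _)
    _ = Real.exp (m + -((1/2 - Real.exp (-1)) * (100 * m))) := (Real.exp_add _ _).symm
    _ ≤ Real.exp (2 - 4*m) := by
        apply Real.exp_le_exp.2
        have := mul_le_mul_of_nonneg_right he.le hm0
        nlinarith

/-- Lemma 3.1 of the paper: in the relaxed adaptive allocation model with `n` bins and a
pool of at most `2^m` strategies, writing `X_s^ν = ∑_{i<s} ν (J i)` and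
`V_s^ν = ∑_{i<s} ⟨Q i, ν⟩`, with probability at least `1 - e^{2-4m}`, simultaneously for
every strategy `ν` in the pool and every time `s`: if `V_s^ν ≥ 100 ‖ν‖_∞ m` then
`X_s^ν ≥ V_s^ν / 2`. -/
theorem lemma_Xs_Vs_approx
    {Ω : Type*} {m0 : MeasurableSpace Ω} {μ : Measure Ω} [IsProbabilityMeasure μ]
    (ℱ : Filtration ℕ m0) (n m : ℕ) (hn : 0 < n)
    (pool : Finset (Fin n → ℝ)) (hpool_card : pool.card ≤ 2 ^ m)
    (hpool_nonneg : ∀ ν ∈ pool, ∀ i, 0 ≤ ν i)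
    (hpool_sum : ∀ ν ∈ pool, ∑ i, ν i = 1)
    (Q : ℕ → Ω → Fin n → ℝ) (J : ℕ → Ω → Fin n)
    (hQ_mem : ∀ t ω, Q t ω ∈ pool)
    (hQ_meas : ∀ t i, Measurable[ℱ t] fun ω => Q t ω i)
    (hJ_meas : ∀ t, Measurable[ℱ (t + 1)] (J t))
    (hJ_law : ∀ t i, (μ[(fun ω => if J t ω = i then (1 : ℝ) else 0) | ℱ t])
        =ᵐ[μ] fun ω => Q t ω i) :
    1 - Real.exp (2 - 4 * m)
      ≤ (μ {ω | ∀ ν ∈ pool, ∀ s : ℕ,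
            100 * (⨆ i, ν i) * m ≤ ∑ r ∈ Finset.range s, ∑ i, Q r ω i * ν i →
            (∑ r ∈ Finset.range s, ∑ i, Q r ω i * ν i) / 2
              ≤ ∑ r ∈ Finset.range s, ν (J r ω)}).toReal := by
  classical
  have hQn : ∀ t ω i, 0 ≤ Q t ω i := fun t ω i => hpool_nonneg _ (hQ_mem t ω) i
  have hQs : ∀ t ω, ∑ i, Q t ω i = 1 := fun t ω => hpool_sum _ (hQ_mem t ω)
  set S : Set Ω := {ω | ∀ ν ∈ pool, ∀ s : ℕ,
      100 * (⨆ i, ν i) * m ≤ ∑ r ∈ Finset.range s, ∑ i, Q r ω i * ν i →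
      (∑ r ∈ Finset.range s, ∑ i, Q r ω i * ν i) / 2
        ≤ ∑ r ∈ Finset.range s, ν (J r ω)} with hS_def
  -- measurability of basic processes
  have hVm : ∀ (ν : Fin n → ℝ) (s : ℕ),
      Measurable fun ω => ∑ r ∈ Finset.range s, ∑ i, Q r ω i * ν i := by
    intro ν s
    refine Finset.measurable_sum _ fun r _ => ?_
    refine Finset.measurable_sum _ fun i _ => ?_
    exact ((hQ_meas r i).mul_const (ν i)).le (ℱ.le r)
  have hXm : ∀ (ν : Fin n → ℝ) (s : ℕ),
      Measurable fun ω => ∑ r ∈ Finset.range s, ν (J r ω) := by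
    intro ν s
    refine Finset.measurable_sum _ fun r _ => ?_
    have : Measurable (ν ∘ J r) :=
      measurable_from_top.comp ((hJ_meas r).le (ℱ.le _))
    simpa [Function.comp_def] using this
  have hS_meas : MeasurableSet S := by
    have hS_eq : S = ⋂ ν ∈ (pool : Set (Fin n → ℝ)), ⋂ s : ℕ,
        ({ω | 100 * (⨆ i, ν i) * m ≤ ∑ r ∈ Finset.range s, ∑ i, Q r ω i * ν i}ᶜ ∪
         {ω | (∑ r ∈ Finset.range s, ∑ i, Q r ω i * ν i) / 2
            ≤ ∑ r ∈ Finset.range s, ν (J r ω)}) := by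
      ext ω
      simp only [hS_def, Set.mem_setOf_eq, Set.mem_iInter, Set.mem_union, Set.mem_compl_iff,
        Finset.mem_coe]
      constructor
      · intro h ν hν s
        by_cases hcond : 100 * (⨆ i, ν i) * m ≤ ∑ r ∈ Finset.range s, ∑ i, Q r ω i * ν i
        · exact Or.inr (h ν hν s hcond)
        · exact Or.inl hcond
      · intro h ν hν s hcond
        rcases h ν hν s with h' | h'
        · exact absurd hcond h'
        · exact h'
    rw [hS_eq]
    refine MeasurableSet.biInter (pool : Set (Fin n → ℝ)).to_countable fun ν _ => ?_
    refine MeasurableSet.iInter fun s => ?_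
    exact ((measurableSet_le measurable_const (hVm ν s)).compl).union
      (measurableSet_le ((hVm ν s).div_const 2) (hXm ν s))
  -- the bad events
  set E : ℝ := Real.exp (-((1/2 - Real.exp (-1)) * (100 * m))) with hE_def
  have hbad : ∀ ν ∈ pool,
      μ {ω | ∃ s : ℕ, (100 * (m:ℝ)) * (⨆ i, ν i) ≤ ∑ r ∈ Finset.range s, ∑ i, Q r ω i * ν i ∧
          (∑ r ∈ Finset.range s, ν (J r ω)) < (∑ r ∈ Finset.range s, ∑ i, Q r ω i * ν i) / 2}
        ≤ ENNReal.ofReal E := by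
    intro ν hν
    exact key_nu ℱ Q J hQn hQs hQ_meas hJ_meas hJ_law ν (hpool_nonneg ν hν)
      (hpool_sum ν hν) (100 * m) (by positivity)
  have hsub : Sᶜ ⊆ ⋃ ν ∈ pool,
      {ω | ∃ s : ℕ, (100 * (m:ℝ)) * (⨆ i, ν i) ≤ ∑ r ∈ Finset.range s, ∑ i, Q r ω i * ν i ∧
          (∑ r ∈ Finset.range s, ν (J r ω)) < (∑ r ∈ Finset.range s, ∑ i, Q r ω i * ν i) / 2} := by
    intro ω hω
    simp only [hS_def, Set.mem_compl_iff, Set.mem_setOf_eq] at hω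
    push_neg at hω
    obtain ⟨ν, hν, s, hcond, hlt⟩ := hω
    refine Set.mem_biUnion hν ⟨s, ?_, hlt⟩
    calc (100 * (m:ℝ)) * (⨆ i, ν i) = 100 * (⨆ i, ν i) * m := by ring
      _ ≤ _ := hcond
  have hcompl : μ Sᶜ ≤ ENNReal.ofReal (Real.exp (2 - 4 * m)) := by
    calc μ Sᶜ ≤ ∑ ν ∈ pool, μ {ω | ∃ s : ℕ,
          (100 * (m:ℝ)) * (⨆ i, ν i) ≤ ∑ r ∈ Finset.range s, ∑ i, Q r ω i * ν i ∧
          (∑ r ∈ Finset.range s, ν (J r ω)) < (∑ r ∈ Finset.range s, ∑ i, Q r ω i * ν i) / 2} :=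
        le_trans (measure_mono hsub) (measure_biUnion_finset_le pool _)
      _ ≤ ∑ _ν ∈ pool, ENNReal.ofReal E := Finset.sum_le_sum fun ν hν => hbad ν hν
      _ = pool.card * ENNReal.ofReal E := by rw [Finset.sum_const, nsmul_eq_mul]
      _ ≤ (2^m : ℕ) * ENNReal.ofReal E := by
          exact mul_le_mul_left (by exact_mod_cast Nat.cast_le.2 hpool_card) _
      _ ≤ ENNReal.ofReal (Real.exp (2 - 4 * m)) := by
          have h1 : ((2^m : ℕ) : ENNReal) = ENNReal.ofReal ((2:ℝ)^m) := by
            rw [ENNReal.ofReal_pow (by norm_num : (0:ℝ) ≤ 2)]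
            push_cast
            norm_num
          rw [h1, ← ENNReal.ofReal_mul (by positivity)]
          exact ENNReal.ofReal_le_ofReal (numeric_bound m)
  have hprob : μ S = 1 - μ Sᶜ := by
    rw [← prob_compl_eq_one_sub hS_meas.compl, compl_compl]
  rw [hprob]
  have hle1 : μ Sᶜ ≤ 1 := prob_le_one
  rw [ENNReal.toReal_sub_of_le hle1 ENNReal.one_ne_top, ENNReal.toReal_one]
  have := ENNReal.toReal_le_of_le_ofReal (Real.exp_nonneg _) hcompl
  linarith
end

section
/- Consider the relaxed adaptive allocation model with n balls and n bins, pool size at most 2^m with m ≥ log n, and all pool distributions having point masses at most k/n. Then, for all sufficiently large n, for every time t with 500·k·m ≤ t ≤ n, the expected number of collisions satisfies E[Col_2(t)] ≥ t²/(9n). -/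
open MeasureTheory Finset

/-- The load of bin `i` after `t` rounds, when ball `s` is placed in bin `J s ω`. -/
def binLoad {Ω : Type*} {n : ℕ} (J : ℕ → Ω → Fin n) (t : ℕ) (i : Fin n) (ω : Ω) : ℕ :=
  ((Finset.range t).filter fun s => J s ω = i).card

/-- The number of collisions (pairs of balls sharing a bin) after `t` rounds. -/
def collisions {Ω : Type*} {n : ℕ} (J : ℕ → Ω → Fin n) (t : ℕ) (ω : Ω) : ℕ :=
  ∑ i, Nat.choose (binLoad J t i ω) 2

namespace CollProof

set_option linter.unusedVariables false

lemma exp_chord {u : ℝ} (h0 : 0 ≤ u) (h1 : u ≤ 1) :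
    Real.exp (-u) ≤ 1 - (1 - Real.exp (-1)) * u := by
  have h := convexOn_exp.2 (Set.mem_univ (0:ℝ)) (Set.mem_univ (-1:ℝ))
    (by linarith : (0:ℝ) ≤ 1 - u) h0 (by ring)
  simp only [smul_eq_mul, mul_zero, zero_add, Real.exp_zero, mul_neg, mul_one] at h
  have : (1 - u) * 0 + u * (-1) = -u := by ring
  nlinarith [h]

lemma sum_exp_le {n : ℕ} (q ν : Fin n → ℝ) (b : ℝ) (hb : 0 < b)
    (hq0 : ∀ i, 0 ≤ q i) (hq1 : ∑ i, q i = 1) (hν0 : ∀ i, 0 ≤ ν i) (hνb : ∀ i, ν i ≤ b) :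
    ∑ i, Real.exp (-((1/b) * ν i)) * q i
      ≤ Real.exp (-((1 - Real.exp (-1))/b * ∑ i, ν i * q i)) := by
  have key : ∀ i, Real.exp (-((1/b) * ν i)) * q i
      ≤ (1 - (1 - Real.exp (-1))/b * ν i) * q i := by
    intro i
    apply mul_le_mul_of_nonneg_right _ (hq0 i)
    have hu := exp_chord (u := ν i / b) (div_nonneg (hν0 i) hb.le) ((div_le_one hb).2 (hνb i))
    have e1 : -((1/b) * ν i) = -(ν i / b) := by ring
    rw [e1]
    calc Real.exp (-(ν i / b)) ≤ 1 - (1 - Real.exp (-1)) * (ν i / b) := hu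
      _ = 1 - (1 - Real.exp (-1))/b * ν i := by ring
  calc ∑ i, Real.exp (-((1/b) * ν i)) * q i
      ≤ ∑ i, (1 - (1 - Real.exp (-1))/b * ν i) * q i := Finset.sum_le_sum fun i _ => key i
    _ = 1 - (1 - Real.exp (-1))/b * ∑ i, ν i * q i := by
        simp only [sub_mul, one_mul, Finset.sum_sub_distrib, hq1, Finset.mul_sum]
        congr 1
        exact Finset.sum_congr rfl fun i _ => by ring
    _ ≤ Real.exp (-((1 - Real.exp (-1))/b * ∑ i, ν i * q i)) := by
        have := Real.add_one_le_exp (-((1 - Real.exp (-1))/b * ∑ i, ν i * q i))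
        linarith

variable {Ω : Type} {m0 : MeasurableSpace Ω} {μ : Measure Ω}

lemma binLoad_cast {n : ℕ} (J : ℕ → Ω → Fin n) (s : ℕ) (i : Fin n) (ω : Ω) :
    (binLoad J s i ω : ℝ) = ∑ r ∈ range s, (if J r ω = i then (1:ℝ) else 0) := by
  rw [binLoad, Finset.card_filter]
  push_cast
  exact Finset.sum_congr rfl fun r _ => by split_ifs <;> simp

lemma load_inner {n : ℕ} (J : ℕ → Ω → Fin n) (s : ℕ) (ω : Ω) (ν : Fin n → ℝ) :
    ∑ i, (binLoad J s i ω : ℝ) * ν i = ∑ r ∈ range s, ν (J r ω) := by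
  simp only [binLoad_cast, Finset.sum_mul, ite_mul, one_mul, zero_mul]
  rw [Finset.sum_comm]
  exact Finset.sum_congr rfl fun r _ => by simp [Finset.sum_ite_eq]

lemma collisions_eq_sum {n : ℕ} (J : ℕ → Ω → Fin n) (t : ℕ) (ω : Ω) :
    collisions J t ω = ∑ s ∈ range t, binLoad J s (J s ω) ω := by
  induction t with
  | zero => simp [collisions, binLoad]
  | succ t ih =>
    have hload : ∀ i, binLoad J (t+1) i ω = binLoad J t i ω + (if J t ω = i then 1 else 0) := by
      intro i
      rw [binLoad, binLoad, Finset.range_add_one, Finset.filter_insert]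
      split_ifs with h
      · rw [Finset.card_insert_of_notMem (by simp)]
      · simp
    have hch : ∀ i, (binLoad J (t+1) i ω).choose 2
        = (binLoad J t i ω).choose 2 + (if J t ω = i then binLoad J t i ω else 0) := by
      intro i
      rw [hload i]
      split_ifs with h
      · rw [Nat.choose_succ_succ, Nat.choose_one_right, Nat.add_comm]
      · simp
    rw [Finset.sum_range_succ, ← ih, collisions, collisions]
    rw [Finset.sum_congr rfl fun i _ => hch i, Finset.sum_add_distrib]
    congr 1
    simp [Finset.sum_ite_eq]

lemma double_sum_sym (g : ℕ → ℕ → ℝ) (hg : ∀ s r, g s r = g r s) (t : ℕ) :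
    ∑ s ∈ range t, ∑ r ∈ range t, g s r
      = 2 * (∑ s ∈ range t, ∑ r ∈ range s, g s r) + ∑ s ∈ range t, g s s := by
  induction t with
  | zero => simp
  | succ t ih =>
    simp only [Finset.sum_range_succ]
    have hsym : ∑ s ∈ range t, g s t = ∑ s ∈ range t, g t s :=
      Finset.sum_congr rfl fun s _ => hg s t
    have expand : ∑ s ∈ range t, (∑ r ∈ range t, g s r + g s t)
        = (∑ s ∈ range t, ∑ r ∈ range t, g s r) + ∑ s ∈ range t, g s t := by
      rw [Finset.sum_add_distrib]
    rw [expand, ih, hsym]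
    ring


lemma mul2_le {x y X : ℝ} (hx0 : 0 ≤ x) (hx : x ≤ X) (hy0 : 0 ≤ y) (hy : y ≤ 1) :
    x * y ≤ X := by nlinarith

lemma mul3_le {x y z X : ℝ} (hx0 : 0 ≤ x) (hx : x ≤ X) (hy0 : 0 ≤ y) (hy : y ≤ 1)
    (hz0 : 0 ≤ z) (hz : z ≤ 1) : x * y * z ≤ X := by
  have h1 : x * y ≤ X := by nlinarith
  nlinarith [mul_nonneg hx0 hy0]


lemma integrable_of_bdd [IsFiniteMeasure μ] {f : Ω → ℝ} {C : ℝ}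
    (hf : Measurable f) (h : ∀ ω, |f ω| ≤ C) : Integrable f μ :=
  (integrable_const C).mono' hf.aestronglyMeasurable
    (Filter.Eventually.of_forall fun ω => by simpa [Real.norm_eq_abs] using h ω)

lemma tower {n : ℕ} [IsProbabilityMeasure μ] (ℱ : Filtration ℕ m0)
    (J : ℕ → Ω → Fin n) (Qi : Ω → ℝ) (s : ℕ) (i : Fin n)
    (hJ : Measurable[ℱ (s+1)] (J s))
    (hcond : (μ[(fun ω => if J s ω = i then (1:ℝ) else 0) | ℱ s]) =ᵐ[μ] Qi)
    {f : Ω → ℝ} {C : ℝ} (hfm : Measurable[ℱ s] f) (hfb : ∀ ω, |f ω| ≤ C) :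
    ∫ ω, f ω * (if J s ω = i then (1:ℝ) else 0) ∂μ = ∫ ω, f ω * Qi ω ∂μ := by
  set X : Ω → ℝ := fun ω => if J s ω = i then (1:ℝ) else 0 with hX
  have hJ0 : Measurable (J s) := hJ.mono (ℱ.le _) le_rfl
  have hXm : Measurable X := by
    apply Measurable.ite (hJ0 (MeasurableSet.singleton i)) measurable_const measurable_const
  have hXb : ∀ ω, |X ω| ≤ 1 := by
    intro ω; by_cases h : J s ω = i <;> simp [hX, h]
  have hf0 : Measurable f := hfm.mono (ℱ.le _) le_rfl
  have hXint : Integrable X μ := integrable_of_bdd hXm hXb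
  have hfXint : Integrable (f * X) μ := by
    apply integrable_of_bdd (hf0.mul hXm)
    intro ω
    calc |(f * X) ω| = |f ω| * |X ω| := abs_mul _ _
      _ ≤ C * 1 := by
          have := hfb ω
          have hb := hXb ω
          have : (0:ℝ) ≤ |f ω| := abs_nonneg _
          nlinarith [hfb ω, hXb ω, abs_nonneg (f ω), abs_nonneg (X ω)]
      _ = C := mul_one C
  have key : μ[f * X | ℱ s] =ᵐ[μ] f * μ[X | ℱ s] :=
    condExp_mul_of_stronglyMeasurable_left hfm.stronglyMeasurable hfXint hXint
  calc ∫ ω, f ω * X ω ∂μ = ∫ ω, (f * X) ω ∂μ := rfl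
    _ = ∫ ω, (μ[f * X | ℱ s]) ω ∂μ := (integral_condExp (ℱ.le s)).symm
    _ = ∫ ω, f ω * (μ[X | ℱ s]) ω ∂μ := integral_congr_ae key
    _ = ∫ ω, f ω * Qi ω ∂μ := by
        apply integral_congr_ae
        filter_upwards [hcond] with ω hω
        rw [hω]


lemma mgf_bound {n : ℕ} [IsProbabilityMeasure μ] (ℱ : Filtration ℕ m0)
    (Q : ℕ → Ω → Fin n → ℝ) (J : ℕ → Ω → Fin n) (b : ℝ) (hb : 0 < b)
    (hQm : ∀ r i, Measurable[ℱ r] fun ω => Q r ω i)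
    (hJm : ∀ r, Measurable[ℱ (r + 1)] (J r))
    (hcond : ∀ r i, (μ[(fun ω => if J r ω = i then (1 : ℝ) else 0) | ℱ r]) =ᵐ[μ]
      fun ω => Q r ω i)
    (hQ0 : ∀ r ω i, 0 ≤ Q r ω i) (hQ1 : ∀ r ω, ∑ i, Q r ω i = 1)
    (ν : Fin n → ℝ) (hν0 : ∀ i, 0 ≤ ν i) (hνb : ∀ i, ν i ≤ b) (s : ℕ) :
    ∫ ω, Real.exp (∑ r ∈ Finset.range s,
      ((1 - Real.exp (-1))/b * (∑ i, ν i * Q r ω i) - (1/b) * ν (J r ω))) ∂μ ≤ 1 := by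
  -- notation
  have hexp1 : (0:ℝ) < Real.exp (-1) := Real.exp_pos _
  have hexp2 : Real.exp (-1) ≤ 1 := by rw [Real.exp_le_one_iff]; norm_num
  have hc0 : 0 ≤ (1 - Real.exp (-1))/b := div_nonneg (by linarith) hb.le
  -- basic measurability
  have hQm0 : ∀ r i, Measurable fun ω => Q r ω i := fun r i => (hQm r i).mono (ℱ.le r) le_rfl
  have hJ0 : ∀ r, Measurable (J r) := fun r => (hJm r).mono (ℱ.le _) le_rfl
  have hνJm : ∀ r, Measurable[ℱ (r+1)] fun ω => ν (J r ω) :=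
    fun r => (measurable_of_finite ν).comp (hJm r)
  have haam : ∀ r, Measurable[ℱ r] fun ω => ∑ i, ν i * Q r ω i :=
    fun r => Finset.measurable_sum _ fun i _ => (hQm r i).const_mul (ν i)
  -- bounds on the summands
  have haa0 : ∀ r (ω : Ω), 0 ≤ ∑ i, ν i * Q r ω i :=
    fun r ω => Finset.sum_nonneg fun i _ => mul_nonneg (hν0 i) (hQ0 r ω i)
  have haab : ∀ r (ω : Ω), ∑ i, ν i * Q r ω i ≤ b := by
    intro r ω
    calc ∑ i, ν i * Q r ω i ≤ ∑ i, b * Q r ω i :=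
          Finset.sum_le_sum fun i _ => mul_le_mul_of_nonneg_right (hνb i) (hQ0 r ω i)
      _ = b := by rw [← Finset.mul_sum, hQ1 r ω, mul_one]
  have hca : ∀ r (ω : Ω), (1 - Real.exp (-1))/b * (∑ i, ν i * Q r ω i) ≤ 1 := by
    intro r ω
    calc (1 - Real.exp (-1))/b * (∑ i, ν i * Q r ω i) ≤ (1 - Real.exp (-1))/b * b :=
          mul_le_mul_of_nonneg_left (haab r ω) hc0
      _ = 1 - Real.exp (-1) := by field_simp
      _ ≤ 1 := by linarith
  have hca0 : ∀ r (ω : Ω), 0 ≤ (1 - Real.exp (-1))/b * (∑ i, ν i * Q r ω i) :=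
    fun r ω => mul_nonneg hc0 (haa0 r ω)
  have hlv0 : ∀ r (ω : Ω), 0 ≤ (1/b) * ν (J r ω) :=
    fun r ω => mul_nonneg (by positivity) (hν0 _)
  have hlv1 : ∀ r (ω : Ω), (1/b) * ν (J r ω) ≤ 1 := by
    intro r ω
    calc (1/b) * ν (J r ω) ≤ (1/b) * b :=
          mul_le_mul_of_nonneg_left (hνb _) (by positivity)
      _ = 1 := by field_simp
  have habs : ∀ r (ω : Ω),
      |(1 - Real.exp (-1))/b * (∑ i, ν i * Q r ω i) - (1/b) * ν (J r ω)| ≤ 2 := by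
    intro r ω
    rw [abs_le]
    constructor
    · nlinarith [hca0 r ω, hlv1 r ω]
    · nlinarith [hca r ω, hlv0 r ω]
  have hsum_bd : ∀ s (ω : Ω), |∑ r ∈ Finset.range s,
      ((1 - Real.exp (-1))/b * (∑ i, ν i * Q r ω i) - (1/b) * ν (J r ω))| ≤ 2 * s := by
    intro s ω
    calc |∑ r ∈ Finset.range s, _| ≤ ∑ r ∈ Finset.range s,
          |(1 - Real.exp (-1))/b * (∑ i, ν i * Q r ω i) - (1/b) * ν (J r ω)| :=
          Finset.abs_sum_le_sum_abs _ _
      _ ≤ ∑ _r ∈ Finset.range s, (2:ℝ) := Finset.sum_le_sum fun r _ => habs r ω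
      _ = 2 * s := by simp [mul_comm]
  have hSm : ∀ s, Measurable[ℱ s] fun ω => ∑ r ∈ Finset.range s,
      ((1 - Real.exp (-1))/b * (∑ i, ν i * Q r ω i) - (1/b) * ν (J r ω)) := by
    intro s
    apply Finset.measurable_sum
    intro r hr
    have hrs : r < s := Finset.mem_range.mp hr
    exact ((haam r).const_mul _ |>.mono (ℱ.mono hrs.le) le_rfl).sub
      (((hνJm r).const_mul _).mono (ℱ.mono hrs) le_rfl)
  -- the induction
  induction s with
  | zero => simp
  | succ s ih =>
    set ff : Ω → ℝ := fun ω => Real.exp (∑ r ∈ Finset.range s,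
        ((1 - Real.exp (-1))/b * (∑ i, ν i * Q r ω i) - (1/b) * ν (J r ω)))
      * Real.exp ((1 - Real.exp (-1))/b * (∑ i, ν i * Q s ω i)) with hff
    have hffm : Measurable[ℱ s] ff :=
      (Real.measurable_exp.comp (hSm s)).mul
        (Real.measurable_exp.comp ((haam s).const_mul _))
    have hff0 : ∀ ω, 0 ≤ ff ω := fun ω => by positivity
    have hffb : ∀ ω, ff ω ≤ Real.exp (2 * s + 1) := by
      intro ω
      rw [hff]
      have h1 := (abs_le.mp (hsum_bd s ω)).2
      have h2 := hca s ω
      calc Real.exp _ * Real.exp _ ≤ Real.exp (2*s) * Real.exp 1 := by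
            apply mul_le_mul (Real.exp_le_exp.mpr h1) (Real.exp_le_exp.mpr h2)
              (Real.exp_pos _).le (Real.exp_pos _).le
        _ = Real.exp (2*s + 1) := by rw [← Real.exp_add]
    have split : ∀ ω : Ω, Real.exp (∑ r ∈ Finset.range (s+1),
        ((1 - Real.exp (-1))/b * (∑ i, ν i * Q r ω i) - (1/b) * ν (J r ω)))
        = ∑ i, (ff ω * Real.exp (-((1/b) * ν i))) * (if J s ω = i then (1:ℝ) else 0) := by
      intro ω
      rw [Finset.sum_range_succ, show
        (∑ r ∈ Finset.range s, ((1 - Real.exp (-1))/b * (∑ i, ν i * Q r ω i) - (1/b) * ν (J r ω)))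
          + ((1 - Real.exp (-1))/b * (∑ i, ν i * Q s ω i) - (1/b) * ν (J s ω))
        = ((∑ r ∈ Finset.range s, ((1 - Real.exp (-1))/b * (∑ i, ν i * Q r ω i) - (1/b) * ν (J r ω)))
          + (1 - Real.exp (-1))/b * (∑ i, ν i * Q s ω i)) + (-((1/b) * ν (J s ω))) from by ring,
        Real.exp_add, Real.exp_add]
      simp only [mul_ite, mul_one, mul_zero, Finset.sum_ite_eq, Finset.mem_univ, if_true, hff]
    -- integrability of the pieces
    have hint1 : ∀ i : Fin n, Integrable
        (fun ω => (ff ω * Real.exp (-((1/b) * ν i))) * (if J s ω = i then (1:ℝ) else 0)) μ := by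
      intro i
      apply integrable_of_bdd (C := Real.exp (2*s+1))
      · exact ((hffm.mono (ℱ.le s) le_rfl).mul_const _).mul
          (Measurable.ite (hJ0 s (MeasurableSet.singleton i)) measurable_const measurable_const)
      · intro ω
        have he : Real.exp (-((1/b) * ν i)) ≤ 1 := Real.exp_le_one_iff.mpr (by
          have := mul_nonneg (le_of_lt (by positivity : (0:ℝ) < 1/b)) (hν0 i); linarith)
        rw [abs_mul, abs_mul]
        have h2 : |if J s ω = i then (1:ℝ) else 0| ≤ 1 := by split_ifs <;> simp
        have h3 : |Real.exp (-((1/b) * ν i))| ≤ 1 := by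
          rw [abs_of_nonneg (Real.exp_pos _).le]; exact he
        rw [abs_of_nonneg (hff0 ω)]
        exact mul3_le (hff0 ω) (hffb ω) (abs_nonneg _) h3 (abs_nonneg _) h2
    have hint2 : ∀ i : Fin n, Integrable
        (fun ω => (ff ω * Real.exp (-((1/b) * ν i))) * Q s ω i) μ := by
      intro i
      apply integrable_of_bdd (C := Real.exp (2*s+1))
      · exact ((hffm.mono (ℱ.le s) le_rfl).mul_const _).mul (hQm0 s i)
      · intro ω
        have he : Real.exp (-((1/b) * ν i)) ≤ 1 := Real.exp_le_one_iff.mpr (by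
          have := mul_nonneg (le_of_lt (by positivity : (0:ℝ) < 1/b)) (hν0 i); linarith)
        have hq1 : Q s ω i ≤ 1 := by
          have : Q s ω i ≤ ∑ j, Q s ω j :=
            Finset.single_le_sum (fun j _ => hQ0 s ω j) (Finset.mem_univ i)
          rw [hQ1 s ω] at this; exact this
        rw [abs_mul, abs_mul, abs_of_nonneg (hff0 ω), abs_of_nonneg (Real.exp_pos _).le,
          abs_of_nonneg (hQ0 s ω i)]
        exact mul3_le (hff0 ω) (hffb ω) (Real.exp_pos _).le he (hQ0 s ω i) hq1
    -- the chain
    have e1 : ∫ ω, Real.exp (∑ r ∈ Finset.range (s+1),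
        ((1 - Real.exp (-1))/b * (∑ i, ν i * Q r ω i) - (1/b) * ν (J r ω))) ∂μ
        = ∑ i, ∫ ω, (ff ω * Real.exp (-((1/b) * ν i))) * (if J s ω = i then (1:ℝ) else 0) ∂μ := by
      simp only [split]
      exact integral_finset_sum _ fun i _ => hint1 i
    have e2 : ∀ i : Fin n, ∫ ω, (ff ω * Real.exp (-((1/b) * ν i))) * (if J s ω = i then (1:ℝ) else 0) ∂μ
        = ∫ ω, (ff ω * Real.exp (-((1/b) * ν i))) * Q s ω i ∂μ := by
      intro i
      exact tower ℱ J (fun ω => Q s ω i) s i (hJm s) (hcond s i)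
        (hffm.mul_const _)
        (C := Real.exp (2*s+1))
        (fun ω => by
          have he : Real.exp (-((1/b) * ν i)) ≤ 1 := Real.exp_le_one_iff.mpr (by
            have := mul_nonneg (le_of_lt (by positivity : (0:ℝ) < 1/b)) (hν0 i); linarith)
          rw [abs_mul, abs_of_nonneg (hff0 ω), abs_of_nonneg (Real.exp_pos _).le]
          exact mul2_le (hff0 ω) (hffb ω) (Real.exp_pos _).le he)
    have e3 : ∑ i, ∫ ω, (ff ω * Real.exp (-((1/b) * ν i))) * Q s ω i ∂μ
        = ∫ ω, ff ω * ∑ i, Real.exp (-((1/b) * ν i)) * Q s ω i ∂μ := by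
      rw [← integral_finset_sum _ fun i _ => hint2 i]
      congr 1
      funext ω
      rw [Finset.mul_sum]
      exact Finset.sum_congr rfl fun i _ => by ring
    have hsum01 : ∀ ω : Ω, 0 ≤ (∑ i, Real.exp (-((1/b) * ν i)) * Q s ω i)
        ∧ (∑ i, Real.exp (-((1/b) * ν i)) * Q s ω i) ≤ 1 := by
      intro ω
      constructor
      · exact Finset.sum_nonneg fun i _ => mul_nonneg (Real.exp_pos _).le (hQ0 s ω i)
      · calc ∑ i, Real.exp (-((1/b) * ν i)) * Q s ω i ≤ ∑ i, Q s ω i := by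
              apply Finset.sum_le_sum
              intro i _
              have he : Real.exp (-((1/b) * ν i)) ≤ 1 := Real.exp_le_one_iff.mpr (by
                have := mul_nonneg (le_of_lt (by positivity : (0:ℝ) < 1/b)) (hν0 i); linarith)
              nlinarith [hQ0 s ω i]
          _ = 1 := hQ1 s ω
    have hint3 : Integrable (fun ω => ff ω * ∑ i, Real.exp (-((1/b) * ν i)) * Q s ω i) μ := by
      apply integrable_of_bdd (C := Real.exp (2*s+1))
      · exact (hffm.mono (ℱ.le s) le_rfl).mul
          (Finset.measurable_sum _ fun i _ => (hQm0 s i).const_mul _)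
      · intro ω
        rw [abs_mul, abs_of_nonneg (hff0 ω), abs_of_nonneg (hsum01 ω).1]
        exact mul2_le (hff0 ω) (hffb ω) (hsum01 ω).1 (hsum01 ω).2
    have hint4 : Integrable
        (fun ω => ff ω * Real.exp (-((1 - Real.exp (-1))/b * ∑ i, ν i * Q s ω i))) μ := by
      apply integrable_of_bdd (C := Real.exp (2*s+1))
      · exact (hffm.mono (ℱ.le s) le_rfl).mul
          (Real.measurable_exp.comp (((haam s).mono (ℱ.le s) le_rfl).const_mul _).neg)
      · intro ω
        have he : Real.exp (-((1 - Real.exp (-1))/b * ∑ i, ν i * Q s ω i)) ≤ 1 :=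
          Real.exp_le_one_iff.mpr (by have := hca0 s ω; linarith)
        rw [abs_mul, abs_of_nonneg (hff0 ω), abs_of_nonneg (Real.exp_pos _).le]
        exact mul2_le (hff0 ω) (hffb ω) (Real.exp_pos _).le he
    have e4 : ∫ ω, ff ω * ∑ i, Real.exp (-((1/b) * ν i)) * Q s ω i ∂μ
        ≤ ∫ ω, ff ω * Real.exp (-((1 - Real.exp (-1))/b * ∑ i, ν i * Q s ω i)) ∂μ := by
      apply integral_mono hint3 hint4
      intro ω
      exact mul_le_mul_of_nonneg_left
        (sum_exp_le (fun i => Q s ω i) ν b hb (hQ0 s ω) (hQ1 s ω) hν0 hνb) (hff0 ω)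
    have e5 : ∫ ω, ff ω * Real.exp (-((1 - Real.exp (-1))/b * ∑ i, ν i * Q s ω i)) ∂μ
        = ∫ ω, Real.exp (∑ r ∈ Finset.range s,
          ((1 - Real.exp (-1))/b * (∑ i, ν i * Q r ω i) - (1/b) * ν (J r ω))) ∂μ := by
      congr 1
      funext ω
      rw [hff, mul_assoc, ← Real.exp_add]
      simp
    calc ∫ ω, Real.exp (∑ r ∈ Finset.range (s+1),
        ((1 - Real.exp (-1))/b * (∑ i, ν i * Q r ω i) - (1/b) * ν (J r ω))) ∂μ
        = ∑ i, ∫ ω, (ff ω * Real.exp (-((1/b) * ν i))) * (if J s ω = i then (1:ℝ) else 0) ∂μ := e1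
      _ = ∑ i, ∫ ω, (ff ω * Real.exp (-((1/b) * ν i))) * Q s ω i ∂μ :=
          Finset.sum_congr rfl fun i _ => e2 i
      _ = ∫ ω, ff ω * ∑ i, Real.exp (-((1/b) * ν i)) * Q s ω i ∂μ := e3
      _ ≤ ∫ ω, ff ω * Real.exp (-((1 - Real.exp (-1))/b * ∑ i, ν i * Q s ω i)) ∂μ := e4
      _ = ∫ ω, Real.exp (∑ r ∈ Finset.range s,
          ((1 - Real.exp (-1))/b * (∑ i, ν i * Q r ω i) - (1/b) * ν (J r ω))) ∂μ := e5
      _ ≤ 1 := ih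


end CollProof

open CollProof in
set_option maxHeartbeats 10000000 in
/-- Part (i) of Theorem 3.1 of the paper: in the relaxed adaptive allocation model with
`n` balls and `n` bins, pool of at most `2^m` strategies (each with point masses at most
`k/n`) and `m ≥ log n`, for all sufficiently large `n` and every `500 k m ≤ t ≤ n`, the
expected number of collisions at time `t` is at least `t²/(9n)`. -/
theorem expected_collisions_lower_bound :
    ∃ n₀ : ℕ, ∀ n : ℕ, n₀ ≤ n → ∀ k m : ℕ, Real.log n ≤ m →
    ∀ (Ω : Type) (_ : MeasurableSpace Ω) (μ : Measure Ω), IsProbabilityMeasure μ →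
    ∀ (ℱ : Filtration ℕ ‹MeasurableSpace Ω›)
      (pool : Finset (Fin n → ℝ)), pool.card ≤ 2 ^ m →
      (∀ ν ∈ pool, ∀ i, 0 ≤ ν i) →
      (∀ ν ∈ pool, ∑ i, ν i = 1) →
      (∀ ν ∈ pool, ∀ i, ν i ≤ (k : ℝ) / n) →
    ∀ (Q : ℕ → Ω → Fin n → ℝ) (J : ℕ → Ω → Fin n),
      (∀ t ω, Q t ω ∈ pool) →
      (∀ t i, Measurable[ℱ t] fun ω => Q t ω i) →
      (∀ t, Measurable[ℱ (t + 1)] (J t)) →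
      (∀ t i, (μ[(fun ω => if J t ω = i then (1 : ℝ) else 0) | ℱ t])
          =ᵐ[μ] fun ω => Q t ω i) →
    ∀ t : ℕ, 500 * k * m ≤ t → t ≤ n →
      (t : ℝ) ^ 2 / (9 * n) ≤ ∫ ω, ((collisions J t ω : ℝ)) ∂μ := by
  refine ⟨3, ?_⟩
  intro n hn k m hm Ω m0 μ hprob ℱ pool hpoolcard hpool0 hpool1 hpoolb Q J hQpool hQm hJm
    hcond t ht1 ht2
  haveI := hprob
  -- basic positivity and size facts
  have hn0 : 0 < n := by omega
  have hnR : (0:ℝ) < n := by exact_mod_cast hn0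
  have hΩ : Nonempty Ω := by
    by_contra h
    rw [not_nonempty_iff] at h
    have h1 : μ Set.univ = 1 := measure_univ
    rw [Set.univ_eq_empty_iff.mpr h] at h1
    simp at h1
  have hk1 : 1 ≤ k := by
    rcases Nat.eq_zero_or_pos k with hk | hk
    · exfalso
      obtain ⟨ω0⟩ := hΩ
      have hmem := hQpool 0 ω0
      have h1 := hpool1 _ hmem
      have hz : ∀ i, Q 0 ω0 i = 0 := fun i =>
        le_antisymm (by simpa [hk] using hpoolb _ hmem i) (hpool0 _ hmem i)
      rw [Finset.sum_congr rfl fun i _ => hz i] at h1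
      simp at h1
    · exact hk
  have hexp1lt : Real.exp 1 < 3 := by
    have := Real.exp_one_lt_d9; linarith
  have hexp1gt : (2:ℝ) < Real.exp 1 := by
    have := Real.exp_one_gt_d9; linarith
  have hlog3 : (1:ℝ) < Real.log n := by
    have h3 : (3:ℝ) ≤ n := by exact_mod_cast hn
    calc (1:ℝ) = Real.log (Real.exp 1) := (Real.log_exp 1).symm
      _ < Real.log 3 := Real.log_lt_log (Real.exp_pos 1) hexp1lt
      _ ≤ Real.log n := Real.log_le_log (by norm_num) h3
  have hm1 : (1:ℝ) < m := lt_of_lt_of_le hlog3 hm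
  have hm2 : 2 ≤ m := by
    have : 1 < m := by exact_mod_cast hm1
    omega
  have ht0 : 0 < t := by
    have h1 : 1000 ≤ 500 * k * m := by
      calc 1000 = 500 * 1 * 2 := by norm_num
        _ ≤ 500 * k * m := Nat.mul_le_mul (Nat.mul_le_mul le_rfl hk1) hm2
    omega
  have htR : (0:ℝ) < t := by exact_mod_cast ht0
  have htn : (t:ℝ) ≤ n := by exact_mod_cast ht2
  have hnexp : (n:ℝ) ≤ Real.exp m := by
    calc (n:ℝ) = Real.exp (Real.log n) := (Real.exp_log hnR).symm
      _ ≤ Real.exp m := Real.exp_le_exp.mpr hm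
  have hpool_exp : (pool.card:ℝ) ≤ Real.exp m := by
    calc (pool.card:ℝ) ≤ ((2:ℕ) ^ m : ℕ) := by exact_mod_cast hpoolcard
      _ = (2:ℝ) ^ m := by push_cast; ring
      _ ≤ (Real.exp 1) ^ m := pow_le_pow_left₀ (by norm_num) hexp1gt.le m
      _ = Real.exp m := by rw [← Real.exp_one_rpow m]; rw [Real.rpow_natCast]
  -- the mass bound
  set b : ℝ := (k:ℝ)/n with hbdef
  have hkR : (1:ℝ) ≤ k := by exact_mod_cast hk1
  have hb : 0 < b := div_pos (by linarith) hnR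
  have hQ0 : ∀ r (ω : Ω) i, 0 ≤ Q r ω i := fun r ω i => hpool0 _ (hQpool r ω) i
  have hQ1 : ∀ r (ω : Ω), ∑ i, Q r ω i = 1 := fun r ω => hpool1 _ (hQpool r ω)
  have hQb : ∀ r (ω : Ω) i, Q r ω i ≤ b := fun r ω i => hpoolb _ (hQpool r ω) i
  -- measurability basics
  have hQm0 : ∀ r i, Measurable fun ω => Q r ω i := fun r i => (hQm r i).mono (ℱ.le r) le_rfl
  have hJ0 : ∀ r, Measurable (J r) := fun r => (hJm r).mono (ℱ.le _) le_rfl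
  -- the supermartingale functions
  set Zf : (Fin n → ℝ) → ℕ → Ω → ℝ := fun ν s ω => Real.exp (∑ r ∈ Finset.range s,
      ((1 - Real.exp (-1))/b * (∑ i, ν i * Q r ω i) - (1/b) * ν (J r ω))) with hZf
  have hexpneg1 : (0:ℝ) < Real.exp (-1) := Real.exp_pos _
  have hexpneg2 : Real.exp (-1) ≤ 1 := by rw [Real.exp_le_one_iff]; norm_num
  have hc0 : 0 ≤ (1 - Real.exp (-1))/b := div_nonneg (by linarith) hb.le
  have hZm : ∀ (ν : Fin n → ℝ) s, Measurable (Zf ν s) := by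
    intro ν s
    apply Real.measurable_exp.comp
    apply Finset.measurable_sum
    intro r _
    exact ((Finset.measurable_sum _ fun i _ => (hQm0 r i).const_mul (ν i)).const_mul _).sub
      (((measurable_of_finite ν).comp (hJ0 r)).const_mul _)
  have hZb : ∀ ν ∈ pool, ∀ s (ω : Ω), Zf ν s ω ≤ Real.exp s := by
    intro ν hν s ω
    rw [hZf]
    apply Real.exp_le_exp.mpr
    calc ∑ r ∈ Finset.range s, ((1 - Real.exp (-1))/b * (∑ i, ν i * Q r ω i) - (1/b) * ν (J r ω))
        ≤ ∑ _r ∈ Finset.range s, (1:ℝ) := by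
          apply Finset.sum_le_sum
          intro r _
          have haab : ∑ i, ν i * Q r ω i ≤ b := by
            calc ∑ i, ν i * Q r ω i ≤ ∑ i, b * Q r ω i :=
                  Finset.sum_le_sum fun i _ =>
                    mul_le_mul_of_nonneg_right (hpoolb ν hν i) (hQ0 r ω i)
              _ = b := by rw [← Finset.mul_sum, hQ1 r ω, mul_one]
          have h1 : (1 - Real.exp (-1))/b * (∑ i, ν i * Q r ω i) ≤ 1 := by
            calc (1 - Real.exp (-1))/b * (∑ i, ν i * Q r ω i) ≤ (1 - Real.exp (-1))/b * b :=
                  mul_le_mul_of_nonneg_left haab hc0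
              _ = 1 - Real.exp (-1) := by field_simp
              _ ≤ 1 := by linarith
          have h2 : 0 ≤ (1/b) * ν (J r ω) :=
            mul_nonneg (by positivity) (hpool0 ν hν _)
          linarith
      _ = s := by simp
  have hZ0 : ∀ (ν : Fin n → ℝ) s (ω : Ω), 0 ≤ Zf ν s ω := fun ν s ω => (Real.exp_pos _).le
  have hZint : ∀ ν ∈ pool, ∀ s, Integrable (Zf ν s) μ := by
    intro ν hν s
    apply integrable_of_bdd (hZm ν s) (C := Real.exp s)
    intro ω
    rw [abs_of_nonneg (hZ0 ν s ω)]
    exact hZb ν hν s ω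
  have hZle1 : ∀ ν ∈ pool, ∀ s, ∫ ω, Zf ν s ω ∂μ ≤ 1 := by
    intro ν hν s
    exact mgf_bound ℱ Q J b hb hQm hJm hcond hQ0 hQ1 ν (hpool0 ν hν) (fun i => hpoolb ν hν i) s
  -- bad events and their measure
  have hmarkov : ∀ ν ∈ pool, ∀ s : ℕ,
      μ {ω | Real.exp (5*m) ≤ Zf ν s ω} ≤ ENNReal.ofReal (Real.exp (-(5*(m:ℝ)))) := by
    intro ν hν s
    have h1 := mul_meas_ge_le_integral_of_nonneg (μ := μ) (f := Zf ν s)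
      (Filter.Eventually.of_forall fun ω => hZ0 ν s ω) (hZint ν hν s) (Real.exp (5*m))
    have h2 : (μ {ω | Real.exp (5*m) ≤ Zf ν s ω}).toReal ≤ Real.exp (-(5*(m:ℝ))) := by
      have h3 := le_trans h1 (hZle1 ν hν s)
      rw [Real.exp_neg]
      rw [← mul_le_mul_iff_right₀ (Real.exp_pos (5*(m:ℝ)))]
      rw [mul_inv_cancel₀ (ne_of_gt (Real.exp_pos (5*(m:ℝ))))]
      exact h3
    rw [← ENNReal.ofReal_toReal (measure_ne_top μ _)]
    exact ENNReal.ofReal_le_ofReal h2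
  set Bad : Set Ω := ⋃ ν ∈ pool, ⋃ s ∈ Finset.range t, {ω | Real.exp (5*m) ≤ Zf ν s ω}
    with hBadDef
  have hBadm : MeasurableSet Bad := by
    apply MeasurableSet.biUnion pool.countable_toSet
    intro ν _
    apply MeasurableSet.biUnion (Finset.range t).countable_toSet
    intro s _
    exact measurableSet_le measurable_const (hZm ν s)
  have hBadμ : μ Bad ≤ ENNReal.ofReal (1/2) := by
    have h1 : μ Bad ≤ ∑ ν ∈ pool, ∑ s ∈ Finset.range t,
        ENNReal.ofReal (Real.exp (-(5*(m:ℝ)))) := by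
      calc μ Bad ≤ ∑ ν ∈ pool, μ (⋃ s ∈ Finset.range t, {ω | Real.exp (5*m) ≤ Zf ν s ω}) :=
            measure_biUnion_finset_le _ _
        _ ≤ ∑ ν ∈ pool, ∑ s ∈ Finset.range t, μ {ω | Real.exp (5*m) ≤ Zf ν s ω} :=
            Finset.sum_le_sum fun ν _ => measure_biUnion_finset_le _ _
        _ ≤ ∑ ν ∈ pool, ∑ s ∈ Finset.range t, ENNReal.ofReal (Real.exp (-(5*(m:ℝ)))) :=
            Finset.sum_le_sum fun ν hν => Finset.sum_le_sum fun s _ => hmarkov ν hν s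
    have h2 : ∑ ν ∈ pool, ∑ s ∈ Finset.range t, ENNReal.ofReal (Real.exp (-(5*(m:ℝ))))
        = (pool.card : ENNReal) * ((t : ENNReal) * ENNReal.ofReal (Real.exp (-(5*(m:ℝ))))) := by
      rw [Finset.sum_const, Finset.sum_const, Finset.card_range, nsmul_eq_mul, nsmul_eq_mul,
        ← mul_assoc, mul_assoc]
    have h3 : (pool.card : ENNReal) * ((t : ENNReal) * ENNReal.ofReal (Real.exp (-(5*(m:ℝ)))))
        ≤ ENNReal.ofReal (1/2) := by
      have hre : (pool.card:ℝ) * ((t:ℝ) * Real.exp (-(5*(m:ℝ)))) ≤ 1/2 := by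
        have hA : (pool.card:ℝ) * ((t:ℝ) * Real.exp (-(5*(m:ℝ))))
            ≤ Real.exp m * (Real.exp m * Real.exp (-(5*(m:ℝ)))) := by
          gcongr <;> linarith [hpool_exp, htn, hnexp]
        have hB : Real.exp (m:ℝ) * (Real.exp (m:ℝ) * Real.exp (-(5*(m:ℝ))))
            = Real.exp (-(3*(m:ℝ))) := by
          rw [← Real.exp_add, ← Real.exp_add]; ring_nf
        have hC : Real.exp (-(3*(m:ℝ))) ≤ Real.exp (-2 : ℝ) :=
          Real.exp_le_exp.mpr (by nlinarith)
        have hD : Real.exp (-2 : ℝ) < 1/2 := by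
          rw [Real.exp_neg]
          rw [inv_lt_comm₀ (Real.exp_pos _) (by norm_num)]
          calc (1/2:ℝ)⁻¹ = 2 := by norm_num
            _ < Real.exp 1 := hexp1gt
            _ ≤ Real.exp 2 := Real.exp_le_exp.mpr (by norm_num)
        linarith [hA, hB ▸ hC]
      calc (pool.card : ENNReal) * ((t : ENNReal) * ENNReal.ofReal (Real.exp (-(5*(m:ℝ)))))
          = ENNReal.ofReal ((pool.card:ℝ) * ((t:ℝ) * Real.exp (-(5*(m:ℝ))))) := by
            rw [ENNReal.ofReal_mul (by positivity), ENNReal.ofReal_mul (by positivity)]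
            simp [ENNReal.ofReal_natCast]
        _ ≤ ENNReal.ofReal (1/2) := ENNReal.ofReal_le_ofReal hre
    exact le_trans h1 (le_trans (le_of_eq h2) h3)
  -- loads: measurability and bounds
  have hLoadm : ∀ s i, Measurable[ℱ s] fun ω => (binLoad J s i ω : ℝ) := by
    intro s i
    have : (fun ω => (binLoad J s i ω : ℝ))
        = fun ω => ∑ r ∈ Finset.range s, (if J r ω = i then (1:ℝ) else 0) :=
      funext fun ω => binLoad_cast J s i ω
    rw [this]
    apply Finset.measurable_sum
    intro r hr
    have hrs : r < s := Finset.mem_range.mp hr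
    exact (Measurable.ite ((hJm r) (MeasurableSet.singleton i)) measurable_const
      measurable_const).mono (ℱ.mono hrs) le_rfl
  have hLoad0 : ∀ s i (ω : Ω), (0:ℝ) ≤ (binLoad J s i ω : ℝ) := fun s i ω => Nat.cast_nonneg _
  have hLoadb : ∀ s i (ω : Ω), (binLoad J s i ω : ℝ) ≤ s := by
    intro s i ω
    have : binLoad J s i ω ≤ s := by
      calc binLoad J s i ω ≤ (Finset.range s).card := Finset.card_filter_le _ _
        _ = s := Finset.card_range s
    exact_mod_cast this
  have hQle1 : ∀ r (ω : Ω) i, Q r ω i ≤ 1 := by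
    intro r ω i
    calc Q r ω i ≤ ∑ j, Q r ω j :=
        Finset.single_le_sum (fun j _ => hQ0 r ω j) (Finset.mem_univ i)
      _ = 1 := hQ1 r ω
  -- the compensated collision count
  set Hf : Ω → ℝ := fun ω => ∑ s ∈ Finset.range t, ∑ i, (binLoad J s i ω : ℝ) * Q s ω i
    with hHfDef
  have hHm : Measurable Hf := by
    apply Finset.measurable_sum
    intro s _
    apply Finset.measurable_sum
    intro i _
    exact ((hLoadm s i).mono (ℱ.le s) le_rfl).mul (hQm0 s i)
  have hHf0 : ∀ ω, 0 ≤ Hf ω := by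
    intro ω
    apply Finset.sum_nonneg
    intro s _
    exact Finset.sum_nonneg fun i _ => mul_nonneg (hLoad0 s i ω) (hQ0 s ω i)
  have hHb : ∀ ω, |Hf ω| ≤ (t:ℝ) * (n * t) := by
    intro ω
    rw [abs_of_nonneg (hHf0 ω)]
    calc Hf ω ≤ ∑ s ∈ Finset.range t, ∑ i : Fin n, (t:ℝ) * 1 := by
          apply Finset.sum_le_sum
          intro s hs
          apply Finset.sum_le_sum
          intro i _
          have h1 : (binLoad J s i ω:ℝ) ≤ t := by
            calc (binLoad J s i ω:ℝ) ≤ s := hLoadb s i ω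
              _ ≤ t := by exact_mod_cast (Finset.mem_range.mp hs).le
          exact mul_le_mul h1 (hQle1 s ω i) (hQ0 s ω i) (by positivity)
      _ ≤ (t:ℝ) * (n * t) := by
          rw [Finset.sum_const, Finset.sum_const, Finset.card_range, Finset.card_univ,
            Fintype.card_fin, nsmul_eq_mul, nsmul_eq_mul]
          exact le_of_eq (by ring)
  have hHint : Integrable Hf μ := integrable_of_bdd hHm hHb
  -- expected collisions equals expectation of Hf
  have hcol : ∫ ω, (collisions J t ω : ℝ) ∂μ = ∫ ω, Hf ω ∂μ := by
    have hint1 : ∀ (s : ℕ) (i : Fin n), Integrable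
        (fun ω => (binLoad J s i ω : ℝ) * (if J s ω = i then (1:ℝ) else 0)) μ := by
      intro s i
      apply integrable_of_bdd (C := (s:ℝ))
      · exact ((hLoadm s i).mono (ℱ.le s) le_rfl).mul
          (Measurable.ite ((hJ0 s) (MeasurableSet.singleton i)) measurable_const measurable_const)
      · intro ω
        rw [abs_mul, abs_of_nonneg (hLoad0 s i ω)]
        have h2 : |if J s ω = i then (1:ℝ) else 0| ≤ 1 := by split_ifs <;> simp
        exact mul2_le (hLoad0 s i ω) (hLoadb s i ω) (abs_nonneg _) h2
    have hint2 : ∀ (s : ℕ) (i : Fin n), Integrable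
        (fun ω => (binLoad J s i ω : ℝ) * Q s ω i) μ := by
      intro s i
      apply integrable_of_bdd (C := (s:ℝ))
      · exact ((hLoadm s i).mono (ℱ.le s) le_rfl).mul (hQm0 s i)
      · intro ω
        rw [abs_mul, abs_of_nonneg (hLoad0 s i ω), abs_of_nonneg (hQ0 s ω i)]
        exact mul2_le (hLoad0 s i ω) (hLoadb s i ω) (hQ0 s ω i) (hQle1 s ω i)
    have hpt : ∀ ω, (collisions J t ω : ℝ) = ∑ s ∈ Finset.range t, ∑ i,
        (binLoad J s i ω : ℝ) * (if J s ω = i then (1:ℝ) else 0) := by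
      intro ω
      rw [collisions_eq_sum J t ω]
      push_cast
      refine Finset.sum_congr rfl fun s _ => ?_
      rw [show (∑ i, (binLoad J s i ω:ℝ) * (if J s ω = i then (1:ℝ) else 0))
        = (binLoad J s (J s ω) ω : ℝ) from by simp [mul_ite, Finset.sum_ite_eq]]
    calc ∫ ω, (collisions J t ω : ℝ) ∂μ
        = ∫ ω, ∑ s ∈ Finset.range t, ∑ i,
            (binLoad J s i ω : ℝ) * (if J s ω = i then (1:ℝ) else 0) ∂μ := by
          simp only [hpt]
      _ = ∑ s ∈ Finset.range t, ∑ i, ∫ ω,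
            (binLoad J s i ω : ℝ) * (if J s ω = i then (1:ℝ) else 0) ∂μ := by
          rw [integral_finset_sum _ fun s _ => integrable_finset_sum _ fun i _ => hint1 s i]
          exact Finset.sum_congr rfl fun s _ => integral_finset_sum _ fun i _ => hint1 s i
      _ = ∑ s ∈ Finset.range t, ∑ i, ∫ ω, (binLoad J s i ω : ℝ) * Q s ω i ∂μ := by
          refine Finset.sum_congr rfl fun s _ => Finset.sum_congr rfl fun i _ => ?_
          exact tower ℱ J (fun ω => Q s ω i) s i (hJm s) (hcond s i) (hLoadm s i)
            (C := (s:ℝ)) (fun ω => by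
              rw [abs_of_nonneg (hLoad0 s i ω)]; exact hLoadb s i ω)
      _ = ∫ ω, Hf ω ∂μ := by
          rw [hHfDef]
          rw [integral_finset_sum _ fun s _ => integrable_finset_sum _ fun i _ => hint2 s i]
          exact Finset.sum_congr rfl fun s _ => (integral_finset_sum _ fun i _ => hint2 s i).symm
    -- the good-event pointwise lower bound
  have hGood : ∀ ω, ω ∉ Bad → (3/10) * ((t:ℝ)^2 / n) ≤ Hf ω := by
    intro ω hω
    have hZlt : ∀ ν ∈ pool, ∀ s ∈ Finset.range t, Zf ν s ω < Real.exp (5*(m:ℝ)) := by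
      intro ν hν s hs
      by_contra hcon
      push_neg at hcon
      apply hω
      rw [hBadDef]
      exact Set.mem_iUnion.mpr ⟨ν, Set.mem_iUnion.mpr ⟨hν,
        Set.mem_iUnion.mpr ⟨s, Set.mem_iUnion.mpr ⟨hs, hcon⟩⟩⟩⟩
    have hstep : ∀ s ∈ Finset.range t,
        (1 - Real.exp (-1)) * (∑ r ∈ Finset.range s, ∑ i, Q s ω i * Q r ω i) - 5*(m:ℝ)*b
          ≤ ∑ i, (binLoad J s i ω : ℝ) * Q s ω i := by
      intro s hs
      have hz := hZlt (Q s ω) (hQpool s ω) s hs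
      simp only [hZf] at hz
      have hlog : ∑ r ∈ Finset.range s, ((1 - Real.exp (-1))/b * (∑ i, Q s ω i * Q r ω i)
          - (1/b) * (Q s ω (J r ω))) < 5*(m:ℝ) := Real.exp_lt_exp.mp hz
      have hsplit : ∑ r ∈ Finset.range s, ((1 - Real.exp (-1))/b * (∑ i, Q s ω i * Q r ω i)
          - (1/b) * (Q s ω (J r ω)))
          = (1 - Real.exp (-1))/b * (∑ r ∈ Finset.range s, ∑ i, Q s ω i * Q r ω i)
            - (1/b) * (∑ r ∈ Finset.range s, Q s ω (J r ω)) := by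
        rw [Finset.sum_sub_distrib, Finset.mul_sum, Finset.mul_sum]
      rw [hsplit] at hlog
      have hload : ∑ i, (binLoad J s i ω : ℝ) * Q s ω i
          = ∑ r ∈ Finset.range s, Q s ω (J r ω) := load_inner J s ω (Q s ω)
      rw [hload]
      have hb' : b ≠ 0 := ne_of_gt hb
      have h3 := (mul_lt_mul_iff_right₀ hb).mpr hlog
      have h4 : (1 - Real.exp (-1)) * (∑ r ∈ Finset.range s, ∑ i, Q s ω i * Q r ω i)
          - (∑ r ∈ Finset.range s, Q s ω (J r ω))
          = b * ((1 - Real.exp (-1))/b * (∑ r ∈ Finset.range s, ∑ i, Q s ω i * Q r ω i)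
            - (1/b) * (∑ r ∈ Finset.range s, Q s ω (J r ω))) := by
        field_simp
      nlinarith [h3, h4]
    set W := ∑ s ∈ Finset.range t, ∑ r ∈ Finset.range s, ∑ i, Q s ω i * Q r ω i with hWdef
    have hHW : (1 - Real.exp (-1)) * W - 5*(m:ℝ)*b*t ≤ Hf ω := by
      rw [hHfDef]
      calc (1 - Real.exp (-1)) * W - 5*(m:ℝ)*b*t
          = ∑ s ∈ Finset.range t, ((1 - Real.exp (-1))
              * (∑ r ∈ Finset.range s, ∑ i, Q s ω i * Q r ω i) - 5*(m:ℝ)*b) := by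
            rw [Finset.sum_sub_distrib, ← Finset.mul_sum, Finset.sum_const, Finset.card_range,
              nsmul_eq_mul, hWdef]
            ring
        _ ≤ ∑ s ∈ Finset.range t, ∑ i, (binLoad J s i ω : ℝ) * Q s ω i :=
            Finset.sum_le_sum hstep
    have hCS : (t:ℝ)^2 / n - t*b ≤ 2*W := by
      have hsym : ∀ s r : ℕ, (∑ i, Q s ω i * Q r ω i) = ∑ i, Q r ω i * Q s ω i :=
        fun s r => Finset.sum_congr rfl fun i _ => mul_comm _ _
      have hds := double_sum_sym (fun s r => ∑ i, Q s ω i * Q r ω i) hsym t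
      have htot : ∑ s ∈ Finset.range t, ∑ r ∈ Finset.range t, ∑ i, Q s ω i * Q r ω i
          = ∑ i, (∑ s ∈ Finset.range t, Q s ω i)^2 := by
        calc ∑ s ∈ Finset.range t, ∑ r ∈ Finset.range t, ∑ i, Q s ω i * Q r ω i
            = ∑ s ∈ Finset.range t, ∑ i, ∑ r ∈ Finset.range t, Q s ω i * Q r ω i :=
              Finset.sum_congr rfl fun s _ => Finset.sum_comm
          _ = ∑ i, ∑ s ∈ Finset.range t, ∑ r ∈ Finset.range t, Q s ω i * Q r ω i :=
              Finset.sum_comm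
          _ = ∑ i, (∑ s ∈ Finset.range t, Q s ω i)^2 := by
              refine Finset.sum_congr rfl fun i _ => ?_
              rw [sq, Finset.sum_mul_sum]
      have hdiag : ∑ s ∈ Finset.range t, ∑ i, Q s ω i * Q s ω i ≤ (t:ℝ)*b := by
        calc ∑ s ∈ Finset.range t, ∑ i, Q s ω i * Q s ω i
            ≤ ∑ _s ∈ Finset.range t, b := by
              apply Finset.sum_le_sum
              intro s _
              calc ∑ i, Q s ω i * Q s ω i ≤ ∑ i, b * Q s ω i :=
                    Finset.sum_le_sum fun i _ =>
                      mul_le_mul_of_nonneg_right (hQb s ω i) (hQ0 s ω i)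
                _ = b := by rw [← Finset.mul_sum, hQ1 s ω, mul_one]
          _ = (t:ℝ)*b := by rw [Finset.sum_const, Finset.card_range, nsmul_eq_mul]
      have hsumD : ∑ i, ∑ s ∈ Finset.range t, Q s ω i = (t:ℝ) := by
        rw [Finset.sum_comm]
        calc ∑ s ∈ Finset.range t, ∑ i, Q s ω i = ∑ _s ∈ Finset.range t, (1:ℝ) :=
              Finset.sum_congr rfl fun s _ => hQ1 s ω
          _ = t := by rw [Finset.sum_const, Finset.card_range, nsmul_eq_mul, mul_one]
      have hcs2 : (t:ℝ)^2 ≤ n * ∑ i, (∑ s ∈ Finset.range t, Q s ω i)^2 := by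
        have h5 := sq_sum_le_card_mul_sum_sq (s := (Finset.univ : Finset (Fin n)))
          (f := fun i : Fin n => ∑ s ∈ Finset.range t, Q s ω i)
        rw [hsumD] at h5
        simpa using h5
      have h4 : ∑ i, (∑ s ∈ Finset.range t, Q s ω i)^2
          = 2*W + ∑ s ∈ Finset.range t, ∑ i, Q s ω i * Q s ω i := by
        rw [← htot, hds, hWdef]
      rw [sub_le_iff_le_add, div_le_iff₀ hnR]
      nlinarith [hcs2, h4, mul_le_mul_of_nonneg_left hdiag (le_of_lt hnR)]
    have h58 : (5/8 : ℝ) ≤ 1 - Real.exp (-1) := by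
      have h9 := Real.exp_one_gt_d9
      have hinv : Real.exp (-1) = (Real.exp 1)⁻¹ := Real.exp_neg 1
      have hle : (Real.exp 1)⁻¹ ≤ 3/8 := by
        rw [inv_le_comm₀ (Real.exp_pos 1) (by norm_num)]
        norm_num
        linarith
      rw [hinv]
      linarith
    have hk500 : (k:ℝ) * 500 ≤ t := by
      have h1 : 500 * k ≤ t := by
        calc 500 * k = 500 * k * 1 := by ring
          _ ≤ 500 * k * m := Nat.mul_le_mul le_rfl (by omega)
          _ ≤ t := ht1
      have h2 : ((500 * k : ℕ) : ℝ) ≤ t := by exact_mod_cast h1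
      push_cast at h2
      linarith
    have hkm500 : 500 * ((k:ℝ) * m) ≤ t := by
      have h2 : ((500 * k * m : ℕ) : ℝ) ≤ t := by exact_mod_cast ht1
      push_cast at h2
      linarith
    have htb : (t:ℝ)*b*500 ≤ (t:ℝ)^2/n := by
      rw [hbdef, show (t:ℝ)*((k:ℝ)/n)*500 = ((t:ℝ)*(k:ℝ)*500)/n from by ring]
      apply (div_le_div_iff_of_pos_right hnR).mpr
      nlinarith [hk500, htR.le]
    have h5mb : 5*(m:ℝ)*b*(t:ℝ)*100 ≤ (t:ℝ)^2/n := by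
      rw [hbdef, show 5*(m:ℝ)*((k:ℝ)/n)*(t:ℝ)*100 = ((500*((k:ℝ)*m))*t)/n from by ring]
      apply (div_le_div_iff_of_pos_right hnR).mpr
      nlinarith [hkm500, htR.le]
    have hX0 : (0:ℝ) ≤ (t:ℝ)^2/n := by positivity
    have hW0 : 0 ≤ W := by linarith
    have hmono : (5/8)*W ≤ (1 - Real.exp (-1))*W := mul_le_mul_of_nonneg_right h58 hW0
    linarith
  -- final assembly
  have hind : ∀ ω, Set.indicator Badᶜ (fun _ => (3/10) * ((t:ℝ)^2/n)) ω ≤ Hf ω := by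
    intro ω
    by_cases hω : ω ∈ Badᶜ
    · rw [Set.indicator_of_mem hω]
      exact hGood ω hω
    · rw [Set.indicator_of_notMem hω]
      exact hHf0 ω
  have hlow : (3/10) * ((t:ℝ)^2/n) * (μ Badᶜ).toReal ≤ ∫ ω, Hf ω ∂μ := by
    have h1 := integral_mono
      ((integrable_const ((3/10) * ((t:ℝ)^2/n))).indicator hBadm.compl) hHint hind
    rwa [integral_indicator_const _ hBadm.compl, smul_eq_mul, mul_comm] at h1
  have hμG : (1/2:ℝ) ≤ (μ Badᶜ).toReal := by
    have h1 : (μ Bad).toReal ≤ 1/2 := by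
      calc (μ Bad).toReal ≤ (ENNReal.ofReal (1/2)).toReal :=
            ENNReal.toReal_mono ENNReal.ofReal_ne_top hBadμ
        _ = 1/2 := by rw [ENNReal.toReal_ofReal]; norm_num
    have h2 : (μ Badᶜ).toReal = 1 - (μ Bad).toReal := by
      rw [measure_compl hBadm (measure_ne_top μ _), measure_univ,
        ENNReal.toReal_sub_of_le prob_le_one ENNReal.one_ne_top]
      simp
    linarith
  calc (t:ℝ)^2/(9*n) = (1/9) * ((t:ℝ)^2/n) := by ring
    _ ≤ (3/10) * ((t:ℝ)^2/n) * (1/2) := by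
        have hX0 : (0:ℝ) ≤ (t:ℝ)^2/n := by positivity
        linarith
    _ ≤ (3/10) * ((t:ℝ)^2/n) * (μ Badᶜ).toReal :=
        mul_le_mul_of_nonneg_left hμG (by positivity)
    _ ≤ ∫ ω, Hf ω ∂μ := hlow
    _ = ∫ ω, (collisions J t ω : ℝ) ∂μ := hcol.symm
end

section
/- Consider the relaxed adaptive allocation model with n balls and n bins, pool size at most 2^m with m ≥ log n, and all pool distributions having point masses at most k/n. There is an absolute constant A > 0 such that for all sufficiently large n, for every L = L(n) ≥ 1 and every time t ≤ n with t ≥ max(500·k·m, 30·√(L·n·log n)), the probability that simultaneously Col_2(t) < t²/(16n) and max_i N_t(i) < L is at most A·n^{−4}. -/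
open MeasureTheory Finset
open scoped ENNReal

section AuxLemmas

variable {Ω : Type*} {n : ℕ}

lemma binLoad_cast_eq (J : ℕ → Ω → Fin n) (t : ℕ) (i : Fin n) (ω : Ω) :
    (binLoad J t i ω : ℝ) = ∑ r ∈ range t, if J r ω = i then (1:ℝ) else 0 := by
  rw [binLoad, Finset.card_filter]
  push_cast
  exact Finset.sum_congr rfl fun r _ => by split <;> simp

lemma binLoad_mono (J : ℕ → Ω → Fin n) {s t : ℕ} (h : s ≤ t) (i : Fin n) (ω : Ω) :
    binLoad J s i ω ≤ binLoad J t i ω :=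
  Finset.card_le_card (Finset.filter_subset_filter _ (Finset.range_subset_range.2 h))

lemma sum_fiber (J : ℕ → Ω → Fin n) (s : ℕ) (ω : Ω) (f : Fin n → ℝ) :
    ∑ r ∈ range s, f (J r ω) = ∑ i, (binLoad J s i ω : ℝ) * f i := by
  simp_rw [binLoad_cast_eq, Finset.sum_mul, ite_mul, one_mul, zero_mul]
  rw [Finset.sum_comm]
  exact Finset.sum_congr rfl fun r _ => by simp

lemma binLoad_succ (J : ℕ → Ω → Fin n) (t : ℕ) (i : Fin n) (ω : Ω) :
    binLoad J (t+1) i ω = binLoad J t i ω + if J t ω = i then 1 else 0 := by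
  unfold binLoad
  rw [Finset.range_add_one, Finset.filter_insert]
  split
  · rw [Finset.card_insert_of_notMem (by simp)]
  · simp

lemma collisions_eq_sum (J : ℕ → Ω → Fin n) (t : ℕ) (ω : Ω) :
    collisions J t ω = ∑ s ∈ range t, binLoad J s (J s ω) ω := by
  induction t with
  | zero => simp [collisions, binLoad]
  | succ t ih =>
    rw [Finset.sum_range_succ, ← ih, collisions, collisions]
    have h : ∀ i : Fin n, Nat.choose (binLoad J (t+1) i ω) 2
        = Nat.choose (binLoad J t i ω) 2 + if J t ω = i then binLoad J t i ω else 0 := by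
      intro i
      rw [binLoad_succ]
      by_cases h : J t ω = i <;>
        simp [h, Nat.choose_succ_succ, Nat.choose_one_right, Nat.add_comm]
    simp_rw [h, Finset.sum_add_distrib]
    congr 1
    simp

lemma double_sum_sym (F : ℕ → ℕ → ℝ) (hF : ∀ r s, F r s = F s r) (t : ℕ) :
    ∑ s ∈ range t, ∑ r ∈ range t, F s r
      = 2 * (∑ s ∈ range t, ∑ r ∈ range s, F s r) + ∑ r ∈ range t, F r r := by
  induction t with
  | zero => simp
  | succ t ih =>
    have h2 : ∑ s ∈ range t, F s t = ∑ r ∈ range t, F t r :=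
      Finset.sum_congr rfl fun r _ => hF r t
    rw [Finset.sum_range_succ]
    simp_rw [Finset.sum_range_succ]
    rw [Finset.sum_add_distrib, ih, h2]
    ring

lemma exp_neg_le_one_sub_half {x : ℝ} (h0 : 0 ≤ x) (h1 : x ≤ 1) :
    Real.exp (-x) ≤ 1 - x / 2 := by
  have h2 : Real.exp (-x) * (1 + x) ≤ 1 := by
    have h3 := Real.add_one_le_exp x
    have h4 : Real.exp (-x) * (1 + x) ≤ Real.exp (-x) * Real.exp x := by
      have := (Real.exp_pos (-x)).le
      nlinarith
    calc Real.exp (-x) * (1 + x) ≤ Real.exp (-x) * Real.exp x := h4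
      _ = 1 := by rw [← Real.exp_add]; simp
  nlinarith [Real.exp_pos (-x)]

lemma integrable_of_bdd {m : MeasurableSpace Ω} {μ : Measure Ω} [IsFiniteMeasure μ]
    {f : Ω → ℝ} (hm : Measurable f) (C : ℝ) (h : ∀ ω, |f ω| ≤ C) : Integrable f μ :=
  ⟨hm.aestronglyMeasurable,
    HasFiniteIntegral.of_bounded (C := C) (ae_of_all _ (by simpa [Real.norm_eq_abs] using h))⟩

lemma aux_scale {c X Y a : ℝ} (hc : 0 < c) (h : (1/2)*(c*Y) - a < c*X) :
    (1/2)*Y - a/c < X := by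
  by_contra hle
  push_neg at hle
  have h2 := mul_le_mul_of_nonneg_left hle hc.le
  have e : c*((1/2)*Y - a/c) = (1/2)*(c*Y) - a := by field_simp
  rw [e] at h2
  linarith

lemma aux_scale2 {c X Y a : ℝ} (hc : 0 < c) (h : (1/2)*(Y/c) - a < X/c) :
    (1/2)*Y - a*c < X := by
  by_contra hle
  push_neg at hle
  have h2 := div_le_div_of_nonneg_right hle hc.le
  have e : ((1/2)*Y - a*c)/c = (1/2)*(Y/c) - a := by field_simp
  rw [e] at h2
  linarith

end AuxLemmas

section Core

variable {Ω : Type} [m0 : MeasurableSpace Ω] (μ : Measure Ω) [IsProbabilityMeasure μ]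
variable {n : ℕ}

lemma core_bound (ℱ : Filtration ℕ m0)
    (Q : ℕ → Ω → Fin n → ℝ) (J : ℕ → Ω → Fin n)
    (hQ0 : ∀ s ω i, 0 ≤ Q s ω i) (hQ1 : ∀ s ω, ∑ i, Q s ω i = 1)
    (hQm : ∀ s i, Measurable[ℱ s] fun ω => Q s ω i)
    (hJm : ∀ s, Measurable[ℱ (s+1)] (J s))
    (hcond : ∀ s i, (μ[(fun ω => if J s ω = i then (1 : ℝ) else 0) | ℱ s])
          =ᵐ[μ] fun ω => Q s ω i)
    (g : ℕ → Ω → Fin n → ℝ)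
    (hg0 : ∀ s ω i, 0 ≤ g s ω i) (hg1 : ∀ s ω i, g s ω i ≤ 1)
    (hgm : ∀ s i, Measurable[ℱ s] fun ω => g s ω i)
    (ℓ : ℕ) (a : ℝ) :
    μ {ω | ∑ r ∈ range ℓ, g r ω (J r ω) ≤
        (1/2) * (∑ r ∈ range ℓ, ∑ i, Q r ω i * g r ω i) - a}
      ≤ ENNReal.ofReal (Real.exp (-a)) := by
  obtain ⟨E, hEdef⟩ : ∃ E : ℕ → Ω → ℝ, ∀ s ω, E s ω =
      (1/2) * (∑ r ∈ range s, ∑ i, Q r ω i * g r ω i) - ∑ r ∈ range s, g r ω (J r ω) :=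
    ⟨_, fun _ _ => rfl⟩
  obtain ⟨M, hMdef⟩ : ∃ M : ℕ → Ω → ℝ, ∀ s ω, M s ω = Real.exp (E s ω) :=
    ⟨_, fun _ _ => rfl⟩
  have hq0 : ∀ s ω, 0 ≤ ∑ i, Q s ω i * g s ω i := fun s ω =>
    Finset.sum_nonneg fun i _ => mul_nonneg (hQ0 s ω i) (hg0 s ω i)
  have hq1 : ∀ s ω, ∑ i, Q s ω i * g s ω i ≤ 1 := by
    intro s ω
    have h : ∑ i, Q s ω i * g s ω i ≤ ∑ i, Q s ω i :=
      Finset.sum_le_sum fun i _ => by nlinarith [hQ0 s ω i, hg0 s ω i, hg1 s ω i]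
    rw [hQ1 s ω] at h
    exact h
  have hJset : ∀ r i, MeasurableSet[ℱ (r+1)] {ω | J r ω = i} := by
    intro r i
    have := (hJm r) (measurableSet_singleton i)
    simpa [Set.preimage, Set.mem_singleton_iff] using this
  have hgJ : ∀ r, Measurable[ℱ (r+1)] fun ω => g r ω (J r ω) := by
    intro r
    have heq : (fun ω => g r ω (J r ω))
        = fun ω => ∑ i, if J r ω = i then g r ω i else 0 := by
      funext ω; simp
    rw [heq]
    exact Finset.measurable_sum _ fun i _ =>
      Measurable.ite (hJset r i) ((hgm r i).mono (ℱ.mono r.le_succ) le_rfl)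
        measurable_const
  have hqm : ∀ s, Measurable[ℱ s] fun ω => ∑ i, Q s ω i * g s ω i := fun s =>
    Finset.measurable_sum _ fun i _ => (hQm s i).mul (hgm s i)
  have hEm : ∀ s, Measurable[ℱ s] (E s) := by
    intro s
    rw [funext (hEdef s)]
    apply Measurable.sub
    · exact (Finset.measurable_sum _ fun r hr =>
        (hqm r).mono (ℱ.mono (Finset.mem_range.1 hr).le) le_rfl).const_mul _
    · exact Finset.measurable_sum _ fun r hr =>
        (hgJ r).mono (ℱ.mono (Finset.mem_range.1 hr)) le_rfl
  have hMm : ∀ s, Measurable[ℱ s] (M s) := by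
    intro s
    rw [funext (hMdef s)]
    exact (Real.measurable_exp).comp (hEm s)
  have hMpos : ∀ s ω, 0 < M s ω := fun s ω => by rw [hMdef]; exact Real.exp_pos _
  have hEbd : ∀ s ω, E s ω ≤ (s:ℝ) := by
    intro s ω
    rw [hEdef]
    have h1 : ∑ r ∈ range s, ∑ i, Q r ω i * g r ω i ≤ s := by
      have h := Finset.sum_le_sum (s := range s) (fun r _ => hq1 r ω)
      simpa using h
    have h2 : 0 ≤ ∑ r ∈ range s, g r ω (J r ω) :=
      Finset.sum_nonneg fun r _ => hg0 r ω (J r ω)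
    linarith
  have hMbd : ∀ s ω, M s ω ≤ Real.exp (s:ℝ) := fun s ω => by
    rw [hMdef]; exact Real.exp_le_exp.2 (hEbd s ω)
  have hint : ∀ s, Integrable (M s) μ := fun s =>
    integrable_of_bdd ((hMm s).mono (ℱ.le s) le_rfl) (Real.exp (s:ℝ))
      (fun ω => by rw [abs_of_pos (hMpos s ω)]; exact hMbd s ω)
  have key : ∀ s, ∫ ω, M s ω ∂μ ≤ 1 := by
    intro s
    induction s with
    | zero =>
      have h : M 0 = fun _ => (1:ℝ) := funext fun ω => by
        rw [hMdef, hEdef]; simp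
      rw [h]
      simp
    | succ s ih =>
      obtain ⟨F, hFdef⟩ : ∃ F : Fin n → Ω → ℝ, ∀ i ω, F i ω =
          Real.exp (E s ω + (1/2) * (∑ j, Q s ω j * g s ω j) - g s ω i) :=
        ⟨_, fun _ _ => rfl⟩
      have hdec : ∀ ω, M (s+1) ω = ∑ i, F i ω * (if J s ω = i then (1:ℝ) else 0) := by
        intro ω
        have h1 : M (s+1) ω = F (J s ω) ω := by
          rw [hMdef, hFdef, hEdef, hEdef]
          congr 1
          rw [Finset.sum_range_succ, Finset.sum_range_succ]
          ring
        rw [h1]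
        rw [Finset.sum_congr rfl (fun i _ => by
          rw [mul_ite, mul_one, mul_zero] :
            ∀ i ∈ Finset.univ, F i ω * (if J s ω = i then (1:ℝ) else 0)
              = if J s ω = i then F i ω else 0)]
        simp
      have hFm : ∀ i, Measurable[ℱ s] (F i) := by
        intro i
        rw [funext (hFdef i)]
        apply Real.measurable_exp.comp
        exact ((hEm s).add ((hqm s).const_mul _)).sub (hgm s i)
      have hFpos : ∀ i ω, 0 < F i ω := fun i ω => by
        rw [hFdef]; exact Real.exp_pos _
      have hFbd : ∀ i ω, F i ω ≤ Real.exp ((s:ℝ) + 1) := by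
        intro i ω
        rw [hFdef]
        apply Real.exp_le_exp.2
        have h1 := hEbd s ω
        have h2 := hq1 s ω
        have h3 := hg0 s ω i
        linarith
      have hmle : ℱ s ≤ m0 := ℱ.le s
      have hindm : ∀ i, Measurable fun ω => (if J s ω = i then (1:ℝ) else 0) := fun i =>
        Measurable.ite (ℱ.le (s+1) _ (hJset s i)) measurable_const measurable_const
      have hindint : ∀ i, Integrable (fun ω => (if J s ω = i then (1:ℝ) else 0)) μ :=
        fun i => integrable_of_bdd (hindm i) 1 (fun ω => by split <;> simp)
      have hprod_int : ∀ i,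
          Integrable (fun ω => F i ω * (if J s ω = i then (1:ℝ) else 0)) μ := by
        intro i
        apply integrable_of_bdd (((hFm i).mono hmle le_rfl).mul (hindm i)) (Real.exp ((s:ℝ)+1))
        intro ω
        simp only [Pi.mul_apply]
        rw [abs_mul]
        have h1 : |(if J s ω = i then (1:ℝ) else 0)| ≤ 1 := by split <;> simp
        have h2 : |F i ω| ≤ Real.exp ((s:ℝ)+1) := by
          rw [abs_of_pos (hFpos i ω)]; exact hFbd i ω
        nlinarith [abs_nonneg (F i ω), abs_nonneg (if J s ω = i then (1:ℝ) else 0),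
          (Real.exp_pos ((s:ℝ)+1)).le]
      have hprodQ_int : ∀ i, Integrable (fun ω => F i ω * Q s ω i) μ := by
        intro i
        apply integrable_of_bdd
          (((hFm i).mono hmle le_rfl).mul (((hQm s i)).mono hmle le_rfl)) (Real.exp ((s:ℝ)+1))
        intro ω
        simp only [Pi.mul_apply]
        rw [abs_mul]
        have h1 : |Q s ω i| ≤ 1 := by
          rw [abs_of_nonneg (hQ0 s ω i)]
          have h := Finset.single_le_sum (f := fun j => Q s ω j)
            (fun j _ => hQ0 s ω j) (Finset.mem_univ i)
          rw [hQ1 s ω] at h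
          exact h
        have h2 : |F i ω| ≤ Real.exp ((s:ℝ)+1) := by
          rw [abs_of_pos (hFpos i ω)]; exact hFbd i ω
        nlinarith [abs_nonneg (F i ω), abs_nonneg (Q s ω i), (Real.exp_pos ((s:ℝ)+1)).le]
      have hkey : ∀ i, ∫ ω, F i ω * (if J s ω = i then (1:ℝ) else 0) ∂μ
          = ∫ ω, F i ω * Q s ω i ∂μ := by
        intro i
        have hpull := condExp_mul_of_stronglyMeasurable_left (μ := μ)
          ((hFm i).stronglyMeasurable)
          (hprod_int i) (hindint i)
        have hcombined : (μ[(F i) * (fun ω => if J s ω = i then (1:ℝ) else 0)|ℱ s])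
            =ᵐ[μ] fun ω => F i ω * Q s ω i := by
          refine hpull.trans ?_
          filter_upwards [hcond s i] with ω hω
          simp only [Pi.mul_apply]
          rw [hω]
        calc ∫ ω, F i ω * (if J s ω = i then (1:ℝ) else 0) ∂μ
            = ∫ ω, (μ[(F i) * (fun ω => if J s ω = i then (1:ℝ) else 0)|ℱ s]) ω ∂μ :=
              (integral_condExp hmle).symm
          _ = ∫ ω, F i ω * Q s ω i ∂μ := integral_congr_ae hcombined
      have hsum : ∫ ω, M (s+1) ω ∂μ
          = ∑ i, ∫ ω, F i ω * (if J s ω = i then (1:ℝ) else 0) ∂μ := by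
        rw [show (fun ω => M (s+1) ω)
            = fun ω => ∑ i, F i ω * (if J s ω = i then (1:ℝ) else 0) from funext hdec]
        exact integral_finset_sum _ fun i _ => hprod_int i
      have hpt : ∀ ω, ∑ i, F i ω * Q s ω i ≤ M s ω := by
        intro ω
        have h1 : ∀ i, F i ω
            = M s ω * Real.exp ((1/2) * ∑ j, Q s ω j * g s ω j)
              * Real.exp (-(g s ω i)) := by
          intro i
          rw [hFdef, hMdef]
          rw [← Real.exp_add, ← Real.exp_add]
          congr 1 <;> ring
        have h2 : ∑ i, F i ω * Q s ω i
            = M s ω * Real.exp ((1/2) * ∑ j, Q s ω j * g s ω j)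
              * ∑ i, Q s ω i * Real.exp (-(g s ω i)) := by
          rw [Finset.mul_sum]
          exact Finset.sum_congr rfl fun i _ => by rw [h1]; ring
        have h3a : ∑ i, Q s ω i * Real.exp (-(g s ω i))
            ≤ ∑ i, Q s ω i * (1 - g s ω i / 2) :=
          Finset.sum_le_sum fun i _ => mul_le_mul_of_nonneg_left
            (exp_neg_le_one_sub_half (hg0 s ω i) (hg1 s ω i)) (hQ0 s ω i)
        have h3b : ∑ i, Q s ω i * (1 - g s ω i / 2)
            = 1 - (∑ j, Q s ω j * g s ω j) / 2 := by
          simp_rw [mul_sub, mul_one, Finset.sum_sub_distrib, hQ1 s ω, ← mul_div_assoc]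
          rw [← Finset.sum_div]
        have h4 : 1 - (∑ j, Q s ω j * g s ω j) / 2
            ≤ Real.exp (-((∑ j, Q s ω j * g s ω j) / 2)) := by
          linarith [Real.add_one_le_exp (-((∑ j, Q s ω j * g s ω j) / 2))]
        have h5 : 0 ≤ M s ω * Real.exp ((1/2) * ∑ j, Q s ω j * g s ω j) :=
          mul_nonneg (hMpos s ω).le (Real.exp_pos _).le
        have h6 : ∑ i, F i ω * Q s ω i
            ≤ M s ω * Real.exp ((1/2) * ∑ j, Q s ω j * g s ω j)
              * Real.exp (-((∑ j, Q s ω j * g s ω j) / 2)) := by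
          rw [h2]
          exact mul_le_mul_of_nonneg_left (le_trans (le_trans h3a (le_of_eq h3b)) h4) h5
        have h7 : M s ω * Real.exp ((1/2) * ∑ j, Q s ω j * g s ω j)
              * Real.exp (-((∑ j, Q s ω j * g s ω j) / 2)) = M s ω := by
          rw [mul_assoc, ← Real.exp_add]
          rw [show (1/2) * (∑ j, Q s ω j * g s ω j)
              + -((∑ j, Q s ω j * g s ω j) / 2) = 0 by ring]
          rw [Real.exp_zero, mul_one]
        rw [h7] at h6
        exact h6
      rw [hsum]
      have e1 : ∑ i, ∫ ω, F i ω * (if J s ω = i then (1:ℝ) else 0) ∂μ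
          = ∑ i, ∫ ω, F i ω * Q s ω i ∂μ := Finset.sum_congr rfl fun i _ => hkey i
      rw [e1, ← integral_finset_sum _ fun i _ => hprodQ_int i]
      exact le_trans (integral_mono
        (integrable_finset_sum _ fun i _ => hprodQ_int i) (hint s) hpt) ih
  have hsubset : {ω | ∑ r ∈ range ℓ, g r ω (J r ω) ≤
        (1/2) * (∑ r ∈ range ℓ, ∑ i, Q r ω i * g r ω i) - a}
      ⊆ {ω | Real.exp a ≤ M ℓ ω} := by
    intro ω hω
    simp only [Set.mem_setOf_eq] at hω ⊢
    rw [hMdef, hEdef]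
    apply Real.exp_le_exp.2
    linarith
  refine le_trans (measure_mono hsubset) ?_
  have hmark := mul_meas_ge_le_integral_of_nonneg (μ := μ)
    (ae_of_all _ fun ω => (hMpos ℓ ω).le) (hint ℓ) (Real.exp a)
  have h2 : (μ {ω | Real.exp a ≤ M ℓ ω}).toReal ≤ Real.exp (-a) := by
    have hea := Real.exp_pos a
    have hnn : (0:ℝ) ≤ (μ {ω | Real.exp a ≤ M ℓ ω}).toReal := ENNReal.toReal_nonneg
    have h3 : Real.exp a * (μ {ω | Real.exp a ≤ M ℓ ω}).toReal ≤ 1 :=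
      le_trans hmark (key ℓ)
    rw [Real.exp_neg]
    have hinv : Real.exp a * (Real.exp a)⁻¹ = 1 := mul_inv_cancel₀ (ne_of_gt hea)
    nlinarith [inv_nonneg.2 hea.le]
  rw [← ENNReal.ofReal_toReal (measure_ne_top μ _)]
  exact ENNReal.ofReal_le_ofReal h2

end Core

lemma real_tail_bound (n m : ℕ) (hnR : (0:ℝ) < n) (hn100 : (100:ℝ) ≤ n)
    (hm : Real.log n ≤ m) (hlog1 : (1:ℝ) ≤ Real.log n) :
    (2:ℝ)^m * n * Real.exp (-(20*(m:ℝ))) + Real.exp (-(5*Real.log n))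
      ≤ 3/(n:ℝ)^4 := by
  have hm1 : (1:ℝ) ≤ m := le_trans hlog1 hm
  have hexp5 : Real.exp (-(5*Real.log n)) = ((n:ℝ)⁻¹)^5 := by
    rw [show -(5*Real.log n) = ((5:ℕ):ℝ) * (-Real.log n) by push_cast; ring]
    rw [Real.exp_nat_mul, Real.exp_neg, Real.exp_log hnR]
  have h2e : (2:ℝ)^m ≤ Real.exp m := by
    have h1 : (2:ℝ) ≤ Real.exp 1 := by
      have := Real.add_one_le_exp 1
      linarith
    calc (2:ℝ)^m ≤ (Real.exp 1)^m := pow_le_pow_left₀ (by norm_num) h1 m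
      _ = Real.exp m := by rw [← Real.exp_nat_mul, mul_one]
  have hne : (n:ℝ) ≤ Real.exp m := by
    calc (n:ℝ) = Real.exp (Real.log n) := (Real.exp_log hnR).symm
      _ ≤ Real.exp m := Real.exp_le_exp.2 hm
  have hB1 : (2:ℝ)^m * n * Real.exp (-(20*(m:ℝ))) ≤ ((n:ℝ)⁻¹)^5 := by
    have hprod : (2:ℝ)^m * n * Real.exp (-(20*(m:ℝ)))
        ≤ Real.exp m * Real.exp m * Real.exp (-(20*(m:ℝ))) :=
      mul_le_mul_of_nonneg_right
        (mul_le_mul h2e hne hnR.le (Real.exp_pos (m:ℝ)).le)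
        (Real.exp_pos (-(20*(m:ℝ)))).le
    have heq : Real.exp (m:ℝ) * Real.exp m * Real.exp (-(20*(m:ℝ)))
        = Real.exp ((m:ℝ) + m + -(20*m)) := by rw [Real.exp_add, Real.exp_add]
    have hle : Real.exp ((m:ℝ) + m + -(20*m)) ≤ Real.exp (-(5*Real.log n)) := by
      apply Real.exp_le_exp.2
      linarith [hm, hlog1, hm1]
    calc (2:ℝ)^m * n * Real.exp (-(20*(m:ℝ)))
        ≤ Real.exp (m:ℝ) * Real.exp m * Real.exp (-(20*(m:ℝ))) := hprod
      _ = Real.exp ((m:ℝ) + m + -(20*m)) := heq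
      _ ≤ Real.exp (-(5*Real.log n)) := hle
      _ = ((n:ℝ)⁻¹)^5 := hexp5
  rw [hexp5]
  have h1 : ((n:ℝ)⁻¹)^5 = 1/(n:ℝ)^5 := by rw [inv_pow, one_div]
  have hfin : ((n:ℝ)⁻¹)^5 + ((n:ℝ)⁻¹)^5 ≤ 3/(n:ℝ)^4 := by
    rw [h1, ← add_div, div_le_div_iff₀ (by positivity) (by positivity)]
    have h3n : (0:ℝ) ≤ 3*(n:ℝ) - 2 := by linarith
    nlinarith [pow_nonneg hnR.le 4, h3n]
  linarith [hB1, hfin]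

/-- Part (ii) of Theorem 3.1 of the paper: in the relaxed adaptive allocation model with
`n` balls and `n` bins, pool of at most `2^m` strategies (each with point masses at most
`k/n`) and `m ≥ log n`, there is an absolute constant `A > 0` such that for all
sufficiently large `n`, every `L ≥ 1` and every time `t ≤ n` with
`t ≥ max (500 k m) (30 √(L n log n))`, the probability that simultaneously
`Col₂(t) < t²/(16n)` and the maximal load is below `L` is at most `A n⁻⁴`. -/
theorem collisions_or_load_whp :
    ∃ A : ℝ, 0 < A ∧ ∃ n₀ : ℕ, ∀ n : ℕ, n₀ ≤ n → ∀ k m : ℕ, Real.log n ≤ m →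
    ∀ (Ω : Type) (_ : MeasurableSpace Ω) (μ : Measure Ω), IsProbabilityMeasure μ →
    ∀ (ℱ : Filtration ℕ ‹MeasurableSpace Ω›)
      (pool : Finset (Fin n → ℝ)), pool.card ≤ 2 ^ m →
      (∀ ν ∈ pool, ∀ i, 0 ≤ ν i) →
      (∀ ν ∈ pool, ∑ i, ν i = 1) →
      (∀ ν ∈ pool, ∀ i, ν i ≤ (k : ℝ) / n) →
    ∀ (Q : ℕ → Ω → Fin n → ℝ) (J : ℕ → Ω → Fin n),
      (∀ t ω, Q t ω ∈ pool) →
      (∀ t i, Measurable[ℱ t] fun ω => Q t ω i) →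
      (∀ t, Measurable[ℱ (t + 1)] (J t)) →
      (∀ t i, (μ[(fun ω => if J t ω = i then (1 : ℝ) else 0) | ℱ t])
          =ᵐ[μ] fun ω => Q t ω i) →
    ∀ L : ℝ, 1 ≤ L → ∀ t : ℕ, t ≤ n →
      max (500 * k * m : ℝ) (30 * Real.sqrt (L * n * Real.log n)) ≤ t →
      (μ {ω | (collisions J t ω : ℝ) < (t : ℝ) ^ 2 / (16 * n) ∧
          ∀ i, (binLoad J t i ω : ℝ) < L}).toReal ≤ A / (n : ℝ) ^ 4 := by
  refine ⟨3, by norm_num, 100, ?_⟩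
  intro n hn k m hm Ω mΩ μ hμP ℱ pool hcard hp0 hp1 hpk Q J hQpool hQm hJm hcond L hL t htn htmax
  haveI := hμP
  -- basic numeric facts
  have hn0 : 0 < n := lt_of_lt_of_le (by norm_num) hn
  have hnR : (0:ℝ) < n := by exact_mod_cast hn0
  have hn100 : (100:ℝ) ≤ n := by exact_mod_cast hn
  have hlog1 : (1:ℝ) ≤ Real.log n := by
    rw [Real.le_log_iff_exp_le hnR]
    have := Real.exp_one_lt_d9
    linarith
  have hm1 : (1:ℝ) ≤ m := le_trans hlog1 hm
  -- Ω is nonempty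
  have hΩne : Nonempty Ω := by
    rcases isEmpty_or_nonempty Ω with hE | hNE
    · exfalso
      have h := hμP.measure_univ
      rw [Set.univ_eq_empty_iff.2 hE] at h
      simp at h
    · exact hNE
  obtain ⟨ω₀⟩ := hΩne
  -- k ≥ 1
  have hk1 : 1 ≤ k := by
    by_contra hk
    push_neg at hk
    interval_cases k
    have hν := hQpool 0 ω₀
    have h1 := hp1 _ hν
    have heq : ∀ i, Q 0 ω₀ i = 0 := fun i =>
      le_antisymm (by simpa using hpk _ hν i) (hp0 _ hν i)
    rw [Finset.sum_congr rfl (fun i _ => heq i)] at h1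
    simp at h1
  have hkR : (1:ℝ) ≤ k := by exact_mod_cast hk1
  -- t facts
  have htkm : (500:ℝ) * k * m ≤ t := le_trans (le_max_left _ _) htmax
  have htnR : (t:ℝ) ≤ n := by exact_mod_cast htn
  have hLn0 : (0:ℝ) ≤ L * n * Real.log n :=
    mul_nonneg (mul_nonneg (le_trans zero_le_one hL) hnR.le) (le_trans zero_le_one hlog1)
  have htsq : 900 * (L * n * Real.log n) ≤ (t:ℝ)^2 := by
    have h := le_trans (le_max_right _ _) htmax
    nlinarith [Real.sq_sqrt hLn0, Real.sqrt_nonneg (L * n * Real.log n)]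
  have ht1 : (1:ℝ) ≤ t := by
    by_contra hlt
    push_neg at hlt
    have ht0' : t = 0 := by exact_mod_cast Nat.lt_one_iff.1 (by exact_mod_cast hlt)
    rw [ht0'] at htsq
    push_cast at htsq
    nlinarith
  have ht0 : (0:ℝ) ≤ t := by linarith
  -- global Q properties
  have hQ0 : ∀ s ω i, 0 ≤ Q s ω i := fun s ω i => hp0 _ (hQpool s ω) i
  have hQ1 : ∀ s ω, ∑ i, Q s ω i = 1 := fun s ω => hp1 _ (hQpool s ω)
  have hQk : ∀ s ω i, Q s ω i ≤ (k:ℝ)/n := fun s ω i => hpk _ (hQpool s ω) i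
  -- measurability of loads
  have hloadm : ∀ r i, Measurable[ℱ r] fun ω => (binLoad J r i ω : ℝ) := by
    intro r i
    have heq : (fun ω => (binLoad J r i ω : ℝ))
        = fun ω => ∑ p ∈ range r, if J p ω = i then (1:ℝ) else 0 :=
      funext fun ω => binLoad_cast_eq J r i ω
    rw [heq]
    refine Finset.measurable_sum _ fun p hp => ?_
    refine Measurable.ite ?_ measurable_const measurable_const
    have hset : MeasurableSet[ℱ (p+1)] {ω | J p ω = i} := by
      have := (hJm p) (measurableSet_singleton i)
      simpa [Set.preimage, Set.mem_singleton_iff] using this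
    exact ℱ.mono (Finset.mem_range.1 hp) _ hset
  have hLpos : (0:ℝ) < L := by linarith
  -- the two bad events, via the core bound
  have hb1 : ∀ ν ∈ pool, ∀ s : ℕ,
      μ {ω | ∑ r ∈ range s, ((n:ℝ)/k) * ν (J r ω) ≤
          (1/2) * (∑ r ∈ range s, ∑ i, Q r ω i * (((n:ℝ)/k) * ν i)) - 20*m}
        ≤ ENNReal.ofReal (Real.exp (-(20*(m:ℝ)))) := by
    intro ν hν s
    refine core_bound μ ℱ Q J hQ0 hQ1 hQm hJm hcond
      (fun _ _ i => ((n:ℝ)/k) * ν i) ?_ ?_ (fun _ _ => measurable_const) s (20*m)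
    · intro s ω i
      exact mul_nonneg (by positivity) (hp0 _ hν i)
    · intro s ω i
      have h1 := hpk _ hν i
      have h0 := hp0 _ hν i
      have hkp : (0:ℝ) < k := by linarith
      show ((n:ℝ)/(k:ℝ)) * ν i ≤ 1
      rw [div_mul_eq_mul_div, div_le_one hkp]
      have h2 : (n:ℝ) * ν i ≤ (n:ℝ) * ((k:ℝ)/n) := by nlinarith
      have h3 : (n:ℝ) * ((k:ℝ)/n) = k := by field_simp
      linarith
  have hb2 : μ {ω | ∑ r ∈ range t, min ((binLoad J r (J r ω) ω : ℝ)) L / L ≤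
          (1/2) * (∑ r ∈ range t, ∑ i, Q r ω i * (min ((binLoad J r i ω : ℝ)) L / L))
            - 5*Real.log n}
        ≤ ENNReal.ofReal (Real.exp (-(5*Real.log n))) := by
    refine core_bound μ ℱ Q J hQ0 hQ1 hQm hJm hcond
      (fun r ω i => min ((binLoad J r i ω : ℝ)) L / L) ?_ ?_ ?_ t (5*Real.log n)
    · intro s ω i
      have h1 : (0:ℝ) ≤ min ((binLoad J s i ω : ℝ)) L :=
        le_min (Nat.cast_nonneg _) hLpos.le
      show (0:ℝ) ≤ min ((binLoad J s i ω : ℝ)) L / L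
      positivity
    · intro s ω i
      show min ((binLoad J s i ω : ℝ)) L / L ≤ 1
      rw [div_le_one hLpos]
      exact min_le_right _ _
    · intro s i
      exact ((hloadm s i).min measurable_const).div_const _
  -- inclusion of the target event in the union of bad events
  set Bad1 : Set Ω := ⋃ ν ∈ pool, ⋃ s ∈ Finset.range t,
      {ω | ∑ r ∈ range s, ((n:ℝ)/k) * ν (J r ω) ≤
          (1/2) * (∑ r ∈ range s, ∑ i, Q r ω i * (((n:ℝ)/k) * ν i)) - 20*m} with hBad1
  set Bad2 : Set Ω := {ω | ∑ r ∈ range t, min ((binLoad J r (J r ω) ω : ℝ)) L / L ≤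
          (1/2) * (∑ r ∈ range t, ∑ i, Q r ω i * (min ((binLoad J r i ω : ℝ)) L / L))
            - 5*Real.log n} with hBad2
  have hincl : {ω | (collisions J t ω : ℝ) < (t : ℝ) ^ 2 / (16 * n) ∧
      ∀ i, (binLoad J t i ω : ℝ) < L} ⊆ Bad1 ∪ Bad2 := by
    intro ω hω
    obtain ⟨hcol, hload⟩ := hω
    by_contra hc
    simp only [Set.mem_union, not_or] at hc
    obtain ⟨hc1, hc2⟩ := hc
    rw [hBad1] at hc1
    simp only [Set.mem_iUnion, not_exists, Set.mem_setOf_eq] at hc1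
    rw [hBad2] at hc2
    simp only [Set.mem_setOf_eq] at hc2
    -- loads are < L at all times up to t
    have hldlt : ∀ r, r ≤ t → ∀ i, (binLoad J r i ω : ℝ) < L := by
      intro r hr i
      refine lt_of_le_of_lt ?_ (hload i)
      exact_mod_cast binLoad_mono J hr i ω
    -- collisions in terms of sums
    have hXeq : (collisions J t ω : ℝ) = ∑ r ∈ range t, (binLoad J r (J r ω) ω : ℝ) := by
      rw [collisions_eq_sum]
      push_cast
      rfl
    -- from ¬Bad2
    have e1 : ∑ r ∈ range t, min ((binLoad J r (J r ω) ω : ℝ)) L / L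
        = (∑ r ∈ range t, (binLoad J r (J r ω) ω : ℝ)) / L := by
      rw [← Finset.sum_div]
      congr 1
      refine Finset.sum_congr rfl fun r hr => ?_
      rw [min_eq_left (le_of_lt (hldlt r (Finset.mem_range.1 hr).le _))]
    have e2 : ∑ r ∈ range t, ∑ i, Q r ω i * (min ((binLoad J r i ω : ℝ)) L / L)
        = (∑ r ∈ range t, ∑ i, Q r ω i * (binLoad J r i ω : ℝ)) / L := by
      have hterm : ∀ r ∈ range t, ∑ i, Q r ω i * (min ((binLoad J r i ω : ℝ)) L / L)
          = (∑ i, Q r ω i * (binLoad J r i ω : ℝ)) / L := by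
        intro r hr
        rw [Finset.sum_div]
        refine Finset.sum_congr rfl fun i _ => ?_
        rw [min_eq_left (le_of_lt (hldlt r (Finset.mem_range.1 hr).le i)), mul_div_assoc]
      rw [Finset.sum_congr rfl hterm, ← Finset.sum_div]
    rw [e1, e2] at hc2
    have q1 : (1/2) * (∑ r ∈ range t, ∑ i, Q r ω i * (binLoad J r i ω : ℝ))
        - 5*Real.log n*L < ∑ r ∈ range t, (binLoad J r (J r ω) ω : ℝ) :=
      aux_scale2 hLpos (not_le.1 hc2)
    -- from ¬Bad1, per round r < t, taking ν = Q r ω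
    have hckpos : (0:ℝ) < (n:ℝ)/k := by positivity
    have q2 : ∀ r ∈ range t,
        (1/2) * (∑ p ∈ range r, ∑ i, Q p ω i * Q r ω i) - 20*(m:ℝ)/((n:ℝ)/k)
          < ∑ i, Q r ω i * (binLoad J r i ω : ℝ) := by
      intro r hr
      have hcr := hc1 (Q r ω) (hQpool r ω) r hr
      have hrw1 : ∑ p ∈ range r, ((n:ℝ)/k) * Q r ω (J p ω)
          = ((n:ℝ)/k) * ∑ p ∈ range r, Q r ω (J p ω) := by
        rw [Finset.mul_sum]
      have hrw2 : ∑ p ∈ range r, ∑ i, Q p ω i * (((n:ℝ)/k) * Q r ω i)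
          = ((n:ℝ)/k) * ∑ p ∈ range r, ∑ i, Q p ω i * Q r ω i := by
        rw [Finset.mul_sum]
        refine Finset.sum_congr rfl fun p _ => ?_
        rw [Finset.mul_sum]
        exact Finset.sum_congr rfl fun i _ => by ring
      rw [hrw1, hrw2] at hcr
      have h := aux_scale hckpos (not_le.1 hcr)
      have hfib : ∑ p ∈ range r, Q r ω (J p ω)
          = ∑ i, Q r ω i * (binLoad J r i ω : ℝ) := by
        rw [sum_fiber J r ω (Q r ω)]
        exact Finset.sum_congr rfl fun i _ => by ring
      rw [hfib] at h
      exact h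
    -- summing the per-round bounds
    have hrange_ne : (range t).Nonempty := by
      refine Finset.nonempty_range_iff.2 ?_
      intro h0
      rw [h0] at ht1
      norm_num at ht1
    have q2sum : (1/2) * (∑ r ∈ range t, ∑ p ∈ range r, ∑ i, Q p ω i * Q r ω i)
        - t * (20*(m:ℝ)/((n:ℝ)/k))
        < ∑ r ∈ range t, ∑ i, Q r ω i * (binLoad J r i ω : ℝ) := by
      have h := Finset.sum_lt_sum_of_nonempty hrange_ne q2
      rw [Finset.sum_sub_distrib, Finset.sum_const, Finset.card_range,
        ← Finset.mul_sum, nsmul_eq_mul] at h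
      linarith
    -- Cauchy–Schwarz lower bound on the pairwise sum
    have hT : (t:ℝ)^2 ≤ 2*(n:ℝ)*(∑ r ∈ range t, ∑ p ∈ range r, ∑ i, Q p ω i * Q r ω i)
        + t*k := by
      have hcs := sq_sum_le_card_mul_sum_sq
        (s := (Finset.univ : Finset (Fin n))) (f := fun i => ∑ r ∈ range t, Q r ω i)
      have hsum_t : ∑ i, ∑ r ∈ range t, Q r ω i = (t:ℝ) := by
        rw [Finset.sum_comm]
        rw [Finset.sum_congr rfl (fun r _ => hQ1 r ω)]
        simp
      have hexp : ∑ i, (∑ r ∈ range t, Q r ω i)^2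
          = ∑ r ∈ range t, ∑ p ∈ range t, ∑ i, Q r ω i * Q p ω i := by
        calc ∑ i, (∑ r ∈ range t, Q r ω i)^2
            = ∑ i, ∑ r ∈ range t, ∑ p ∈ range t, Q r ω i * Q p ω i := by
              refine Finset.sum_congr rfl fun i _ => ?_
              rw [sq, Finset.sum_mul_sum]
          _ = ∑ r ∈ range t, ∑ i, ∑ p ∈ range t, Q r ω i * Q p ω i := Finset.sum_comm
          _ = ∑ r ∈ range t, ∑ p ∈ range t, ∑ i, Q r ω i * Q p ω i :=
              Finset.sum_congr rfl fun r _ => Finset.sum_comm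
      have hsym := double_sum_sym (fun r p => ∑ i, Q r ω i * Q p ω i)
        (fun r p => Finset.sum_congr rfl fun i _ => mul_comm _ _) t
      have hdiag : ∑ r ∈ range t, ∑ i, Q r ω i * Q r ω i ≤ (t:ℝ) * ((k:ℝ)/n) := by
        have h := Finset.sum_le_sum (s := range t)
          (f := fun r => ∑ i, Q r ω i * Q r ω i) (g := fun _ => (k:ℝ)/n) ?_
        · rw [Finset.sum_const, Finset.card_range, nsmul_eq_mul] at h
          exact h
        · intro r _
          have h1 : ∑ i, Q r ω i * Q r ω i ≤ ∑ i, ((k:ℝ)/n) * Q r ω i :=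
            Finset.sum_le_sum fun i _ =>
              mul_le_mul_of_nonneg_right (hQk r ω i) (hQ0 r ω i)
          rw [← Finset.mul_sum, hQ1 r ω, mul_one] at h1
          exact h1
      have hinner : ∑ r ∈ range t, ∑ p ∈ range r, ∑ i, Q r ω i * Q p ω i
          = ∑ r ∈ range t, ∑ p ∈ range r, ∑ i, Q p ω i * Q r ω i :=
        Finset.sum_congr rfl fun r _ => Finset.sum_congr rfl fun p _ =>
          Finset.sum_congr rfl fun i _ => mul_comm _ _
      have hnk : (n:ℝ) * ((t:ℝ) * ((k:ℝ)/n)) = t*k := by field_simp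
      rw [hsum_t, hexp, hsym, hinner] at hcs
      have hcard : (((Finset.univ : Finset (Fin n)).card : ℕ) : ℝ) = (n:ℝ) := by simp
      rw [hcard] at hcs
      have h5 : (n:ℝ)*(2*(∑ r ∈ range t, ∑ p ∈ range r, ∑ i, Q p ω i * Q r ω i)
          + ∑ r ∈ range t, ∑ i, Q r ω i * Q r ω i)
          = 2*(n:ℝ)*(∑ r ∈ range t, ∑ p ∈ range r, ∑ i, Q p ω i * Q r ω i)
            + (n:ℝ)*(∑ r ∈ range t, ∑ i, Q r ω i * Q r ω i) := by ring
      have h6 : (n:ℝ)*(∑ r ∈ range t, ∑ i, Q r ω i * Q r ω i)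
          ≤ (n:ℝ)*((t:ℝ) * ((k:ℝ)/n)) := mul_le_mul_of_nonneg_left hdiag hnR.le
      rw [hnk] at h6
      linarith [hcs, h5, h6]
    -- contradiction
    have hdivc : 20*(m:ℝ)/((n:ℝ)/k) = 20*m*k/n := by
      rw [div_div_eq_mul_div]
    rw [hXeq] at hcol
    rw [hdivc] at q2sum
    have hX0 : 0 ≤ ∑ r ∈ range t, (binLoad J r (J r ω) ω : ℝ) :=
      Finset.sum_nonneg fun r _ => Nat.cast_nonneg _
    have h16 : (∑ r ∈ range t, (binLoad J r (J r ω) ω : ℝ)) * (16*(n:ℝ)) < (t:ℝ)^2 := by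
      rw [lt_div_iff₀ (by positivity)] at hcol
      exact hcol
    have en1 : (n:ℝ) * ((t:ℝ) * (20*(m:ℝ)*k/n)) = 20*t*m*k := by
      field_simp
    have q2n : (n:ℝ)*((1/2)*(∑ r ∈ range t, ∑ p ∈ range r, ∑ i, Q p ω i * Q r ω i))
        - 20*(t:ℝ)*m*k < n*(∑ r ∈ range t, ∑ i, Q r ω i * (binLoad J r i ω : ℝ)) := by
      have h := mul_lt_mul_of_pos_left q2sum hnR
      rw [mul_sub, en1] at h
      exact h
    have q1n : (n:ℝ)*(∑ r ∈ range t, ∑ i, Q r ω i * (binLoad J r i ω : ℝ))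
        - 10*(n:ℝ)*(Real.log n)*L
        < 2*(n:ℝ)*(∑ r ∈ range t, (binLoad J r (J r ω) ω : ℝ)) := by
      have h := mul_lt_mul_of_pos_left q1 (by linarith : (0:ℝ) < 2*(n:ℝ))
      have e : 2*(n:ℝ)*((1/2) * (∑ r ∈ range t, ∑ i, Q r ω i * (binLoad J r i ω : ℝ))
          - 5*Real.log n*L)
          = (n:ℝ)*(∑ r ∈ range t, ∑ i, Q r ω i * (binLoad J r i ω : ℝ))
            - 10*(n:ℝ)*(Real.log n)*L := by ring
      rw [e] at h
      exact h
    have f1 : (t:ℝ)*(500*k*m) ≤ (t:ℝ)*t := mul_le_mul_of_nonneg_left htkm ht0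
    have f2 : (t:ℝ)*k ≤ (t:ℝ)*k*m := by
      have hk0 : (0:ℝ) ≤ k := by linarith
      have h := mul_le_mul_of_nonneg_left hm1 (mul_nonneg ht0 hk0)
      linarith only [h]
    have ht1sq : (1:ℝ) ≤ (t:ℝ)^2 := by
      have h := mul_le_mul ht1 ht1 zero_le_one ht0
      have e : (t:ℝ)*t = (t:ℝ)^2 := by ring
      linarith only [h, e]
    linarith only [q1n, q2n, hT, h16, f1, f2, htsq, ht1sq]
  -- measure computation
  have hBad1bound : μ Bad1 ≤ ENNReal.ofReal ((2:ℝ)^m * n * Real.exp (-(20*(m:ℝ)))) := by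
    rw [hBad1]
    refine le_trans (measure_biUnion_finset_le _ _) ?_
    have hstep : ∀ ν ∈ pool, μ (⋃ s ∈ Finset.range t,
        {ω | ∑ r ∈ range s, ((n:ℝ)/k) * ν (J r ω) ≤
          (1/2) * (∑ r ∈ range s, ∑ i, Q r ω i * (((n:ℝ)/k) * ν i)) - 20*m})
        ≤ (t : ℝ≥0∞) * ENNReal.ofReal (Real.exp (-(20*(m:ℝ)))) := by
      intro ν hν
      refine le_trans (measure_biUnion_finset_le _ _) ?_
      refine le_trans (Finset.sum_le_sum fun s _ => hb1 ν hν s) ?_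
      rw [Finset.sum_const, Finset.card_range, nsmul_eq_mul]
    refine le_trans (Finset.sum_le_sum hstep) ?_
    rw [Finset.sum_const, nsmul_eq_mul]
    have hc1 : (pool.card : ℝ≥0∞) ≤ ((2^m : ℕ) : ℝ≥0∞) := by
      exact_mod_cast hcard
    have hc2 : (t : ℝ≥0∞) ≤ (n : ℝ≥0∞) := by exact_mod_cast htn
    calc (pool.card : ℝ≥0∞) * ((t : ℝ≥0∞) * ENNReal.ofReal (Real.exp (-(20*(m:ℝ)))))
        ≤ ((2^m : ℕ) : ℝ≥0∞) * ((n : ℝ≥0∞) * ENNReal.ofReal (Real.exp (-(20*(m:ℝ))))) :=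
          mul_le_mul' hc1 (mul_le_mul' hc2 le_rfl)
      _ = ENNReal.ofReal ((2:ℝ)^m * n * Real.exp (-(20*(m:ℝ)))) := by
          rw [← ENNReal.ofReal_natCast (2^m), ← ENNReal.ofReal_natCast n,
            ← ENNReal.ofReal_mul (by positivity), ← ENNReal.ofReal_mul (by positivity)]
          congr 1
          push_cast
          ring
  -- real-number bound
  have hreal := real_tail_bound n m hnR hn100 hm hlog1
  -- final assembly
  have htotal : μ {ω | (collisions J t ω : ℝ) < (t : ℝ) ^ 2 / (16 * n) ∧
      ∀ i, (binLoad J t i ω : ℝ) < L} ≤ ENNReal.ofReal (3/(n:ℝ)^4) := by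
    calc μ {ω | (collisions J t ω : ℝ) < (t : ℝ) ^ 2 / (16 * n) ∧
        ∀ i, (binLoad J t i ω : ℝ) < L}
        ≤ μ (Bad1 ∪ Bad2) := measure_mono hincl
      _ ≤ μ Bad1 + μ Bad2 := measure_union_le _ _
      _ ≤ ENNReal.ofReal ((2:ℝ)^m * n * Real.exp (-(20*(m:ℝ))))
          + ENNReal.ofReal (Real.exp (-(5*Real.log n))) := by
          refine add_le_add hBad1bound ?_
          rw [hBad2]
          exact hb2
      _ = ENNReal.ofReal ((2:ℝ)^m * n * Real.exp (-(20*(m:ℝ)))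
          + Real.exp (-(5*Real.log n))) :=
          (ENNReal.ofReal_add (by positivity) (Real.exp_pos _).le).symm
      _ ≤ ENNReal.ofReal (3/(n:ℝ)^4) := ENNReal.ofReal_le_ofReal hreal
  exact ENNReal.toReal_le_of_le_ofReal (by positivity) htotal
end
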